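/- arXiv:1309.5216 — 5 statements merged into one kernel-verified Lean document; each statement's English description precedes it below -/
import Mathlib

section
/- The Rogers–Selberg identity holds: ∑_{r=0}^∞ a^r q^{r²}/(q;q)_r = 1/(aq;q)_∞ · ∑_{r=0}^∞ (1-aq^{2r})/(1-a) · (a;q)_r/(q;q)_r · (-1)^r a^{2r} q^{5r(r-1)/2 + 2r}. -/
/-- The finite q-Pochhammer symbol `(a;q)_k`. -/
noncomputable def qPoch (a q : ℂ) (k : ℕ) : ℂ := ∏ j ∈ Finset.range k, (1 - a * q ^ j)

/-- The infinite q-Pochhammer symbol `(a;q)_∞`. -/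
noncomputable def qPochInf (a q : ℂ) : ℂ := ∏' j : ℕ, (1 - a * q ^ j)

namespace RS

open Finset Filter Complex Topology

/-- The quadratic exponent in the Rogers–Selberg series. -/
def En (n : ℕ) : ℕ := 5 * (n * (n - 1) / 2) + 2 * n

lemma En_succ (n : ℕ) : En (n + 1) = En n + (5 * n + 2) := by
  have h1 : (n + 1) * (n + 1 - 1) = n * (n - 1) + 2 * n := by
    cases n with
    | zero => rfl
    | succ m => simp only [Nat.add_sub_cancel]; ring
  unfold En
  rw [h1, Nat.add_mul_div_left _ _ (by norm_num : 0 < 2)]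
  ring

lemma qPoch_succ (x q : ℂ) (n : ℕ) :
    qPoch x q (n + 1) = qPoch x q n * (1 - x * q ^ n) := Finset.prod_range_succ _ n

lemma qPoch_succ' (x q : ℂ) (n : ℕ) :
    qPoch x q (n + 1) = (1 - x) * qPoch (x * q) q n := by
  rw [qPoch, Finset.prod_range_succ', qPoch, pow_zero, mul_one, mul_comm]
  congr 1
  refine Finset.prod_congr rfl fun i _ => ?_
  rw [pow_succ']
  ring

lemma qPoch_zero (x q : ℂ) : qPoch x q 0 = 1 := Finset.prod_range_zero _

lemma one_sub_q_pow_ne {q : ℂ} (hq : ‖q‖ < 1) (n : ℕ) : (1 : ℂ) - q * q ^ n ≠ 0 := by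
  intro h
  have h2 : q * q ^ n = 1 := by linear_combination -h
  have : ‖q * q ^ n‖ < 1 := by
    rw [norm_mul, norm_pow]
    have hle : ‖q‖ * ‖q‖ ^ n ≤ ‖q‖ * 1 :=
      mul_le_mul_of_nonneg_left (pow_le_one₀ (norm_nonneg q) hq.le) (norm_nonneg q)
    linarith
  rw [h2, norm_one] at this
  exact absurd this (lt_irrefl 1)

lemma qPochq_ne_zero {q : ℂ} (hq : ‖q‖ < 1) (n : ℕ) : qPoch q q n ≠ 0 := by
  induction n with
  | zero => simp [qPoch_zero]
  | succ m ih => rw [qPoch_succ]; exact mul_ne_zero ih (one_sub_q_pow_ne hq m)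

lemma norm_qPochq_ge {q : ℂ} (hq : ‖q‖ < 1) (n : ℕ) :
    (1 - ‖q‖) ^ n ≤ ‖qPoch q q n‖ := by
  induction n with
  | zero => simp [qPoch_zero]
  | succ m ih =>
    rw [qPoch_succ, norm_mul, pow_succ]
    have h1 : 1 - ‖q‖ ≤ ‖1 - q * q ^ m‖ := by
      have h2 : ‖q * q ^ m‖ ≤ ‖q‖ := by
        rw [norm_mul, norm_pow]
        calc ‖q‖ * ‖q‖ ^ m ≤ ‖q‖ * 1 := by
              exact mul_le_mul_of_nonneg_left (pow_le_one₀ (norm_nonneg q) hq.le) (norm_nonneg q)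
          _ = ‖q‖ := mul_one _
      calc 1 - ‖q‖ ≤ 1 - ‖q * q ^ m‖ := by linarith
        _ ≤ ‖1 - q * q ^ m‖ := by
            have := norm_sub_norm_le (1 : ℂ) (q * q ^ m)
            simpa using this
    exact mul_le_mul ih h1 (by linarith [norm_nonneg q, hq]) (norm_nonneg _)

lemma norm_qPoch_le (x : ℂ) {q : ℂ} (hq : ‖q‖ < 1) (n : ℕ) :
    ‖qPoch x q n‖ ≤ (1 + ‖x‖) ^ n := by
  induction n with
  | zero => simp [qPoch_zero]
  | succ m ih =>
    rw [qPoch_succ, norm_mul, pow_succ]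
    have h1 : ‖1 - x * q ^ m‖ ≤ 1 + ‖x‖ := by
      calc ‖1 - x * q ^ m‖ ≤ ‖(1 : ℂ)‖ + ‖x * q ^ m‖ := norm_sub_le _ _
        _ ≤ 1 + ‖x‖ := by
            rw [norm_one, norm_mul, norm_pow]
            have : ‖x‖ * ‖q‖ ^ m ≤ ‖x‖ * 1 :=
              mul_le_mul_of_nonneg_left (pow_le_one₀ (norm_nonneg q) hq.le) (norm_nonneg x)
            linarith
    exact mul_le_mul ih h1 (norm_nonneg _) (by positivity)

/-- Master summability lemma: geometric × super-geometric. -/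
lemma summable_master {ρ : ℝ} (hρ0 : 0 ≤ ρ) (hρ1 : ρ < 1) (P B : ℝ) (hB : 0 ≤ B)
    (c : ℕ → ℕ) (hc : ∀ n, c n + n ≤ c (n + 1)) :
    Summable (fun n : ℕ => P * B ^ n * ρ ^ c n) := by
  apply summable_of_ratio_norm_eventually_le (r := 1/2) (by norm_num)
  have h0 : Tendsto (fun n : ℕ => B * ρ ^ n) atTop (𝓝 0) := by
    simpa using (tendsto_pow_atTop_nhds_zero_of_lt_one hρ0 hρ1).const_mul B
  have h1 : ∀ᶠ n : ℕ in atTop, B * ρ ^ n ≤ 1/2 :=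
    h0.eventually (eventually_le_nhds (by norm_num))
  filter_upwards [h1] with n hn
  have hcn : ρ ^ c (n + 1) ≤ ρ ^ (c n + n) := pow_le_pow_of_le_one hρ0 hρ1.le (hc n)
  have e1 : ‖P * B ^ (n+1) * ρ ^ c (n+1)‖ = |P| * B ^ (n+1) * ρ ^ c (n+1) := by
    rw [Real.norm_eq_abs, abs_mul, abs_mul, _root_.abs_of_nonneg (pow_nonneg hB _),
      _root_.abs_of_nonneg (pow_nonneg hρ0 _)]
  have e2 : ‖P * B ^ n * ρ ^ c n‖ = |P| * B ^ n * ρ ^ c n := by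
    rw [Real.norm_eq_abs, abs_mul, abs_mul, _root_.abs_of_nonneg (pow_nonneg hB _),
      _root_.abs_of_nonneg (pow_nonneg hρ0 _)]
  rw [e1, e2]
  calc |P| * B ^ (n+1) * ρ ^ c (n+1) ≤ |P| * B ^ (n+1) * (ρ ^ (c n) * ρ ^ n) := by
        rw [← pow_add]; gcongr
    _ = (|P| * B ^ n * ρ ^ c n) * (B * ρ ^ n) := by ring
    _ ≤ (|P| * B ^ n * ρ ^ c n) * (1/2) := by
        exact mul_le_mul_of_nonneg_left hn (by positivity)
    _ = 1/2 * (|P| * B ^ n * ρ ^ c n) := by ring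


/-! ### The series -/

noncomputable def fR (q a : ℂ) (n : ℕ) : ℂ := a ^ n * q ^ (n ^ 2) / qPoch q q n

noncomputable def VR (q a : ℂ) : ℕ → ℂ
  | 0 => 1
  | n + 1 => (1 - a * q ^ (2 * (n + 1))) * qPoch (a * q) q n

noncomputable def phiR (q a : ℂ) (n : ℕ) : ℂ :=
  (-1) ^ n * a ^ (2 * n) * q ^ En n * VR q a n / qPoch q q n

noncomputable def AR (q a : ℂ) : ℕ → ℂ
  | 0 => 0
  | n + 1 => (-1) ^ (n + 1) * a ^ (2 * (n + 1)) * q ^ En (n + 1) *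
      (1 + q ^ (n + 1) - a * q ^ (2 * (n + 1))) * qPoch (a * q) q n / qPoch q q n

noncomputable def CR (q a : ℂ) (n : ℕ) : ℂ :=
  (-1) ^ n * a ^ (2 * n + 1) * q ^ (En n + 4 * n + 1) * qPoch (a * q) q n / qPoch q q n

noncomputable def wR (q a : ℂ) (n : ℕ) : ℂ := a ^ (n + 1) * q ^ ((n + 1) ^ 2) / qPoch q q n

section Bounds

variable {q : ℂ} (hq : ‖q‖ < 1)

lemma norm_aq_poch_le (a : ℂ) (n : ℕ) (hq : ‖q‖ < 1) :
    ‖qPoch (a * q) q n‖ ≤ (1 + ‖a‖) ^ n := by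
  calc ‖qPoch (a * q) q n‖ ≤ (1 + ‖a * q‖) ^ n := norm_qPoch_le _ hq n
    _ ≤ (1 + ‖a‖) ^ n := by
        have hle : ‖a * q‖ ≤ ‖a‖ := by
          rw [norm_mul]
          calc ‖a‖ * ‖q‖ ≤ ‖a‖ * 1 := mul_le_mul_of_nonneg_left hq.le (norm_nonneg a)
            _ = ‖a‖ := mul_one _
        exact pow_le_pow_left₀ (by positivity) (by linarith) n

lemma norm_VR_le (a : ℂ) (n : ℕ) (hq : ‖q‖ < 1) : ‖VR q a n‖ ≤ (1 + ‖a‖) ^ (n + 1) := by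
  cases n with
  | zero =>
    simp only [VR, norm_one, zero_add, pow_one]
    linarith [norm_nonneg a]
  | succ m =>
    show ‖(1 - a * q ^ (2 * (m + 1))) * qPoch (a * q) q m‖ ≤ _
    rw [norm_mul]
    have h1 : ‖1 - a * q ^ (2 * (m + 1))‖ ≤ 1 + ‖a‖ := by
      calc ‖1 - a * q ^ (2 * (m + 1))‖ ≤ ‖(1 : ℂ)‖ + ‖a * q ^ (2 * (m + 1))‖ := norm_sub_le _ _
        _ ≤ 1 + ‖a‖ := by
            rw [norm_one, norm_mul, norm_pow]
            have : ‖a‖ * ‖q‖ ^ (2 * (m + 1)) ≤ ‖a‖ * 1 :=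
              mul_le_mul_of_nonneg_left (pow_le_one₀ (norm_nonneg q) hq.le) (norm_nonneg a)
            linarith
    calc ‖1 - a * q ^ (2 * (m + 1))‖ * ‖qPoch (a * q) q m‖
        ≤ (1 + ‖a‖) * (1 + ‖a‖) ^ m := by
          apply mul_le_mul h1 (norm_aq_poch_le a m hq) (norm_nonneg _) (by positivity)
      _ = (1 + ‖a‖) ^ (m + 1) := by ring
      _ ≤ (1 + ‖a‖) ^ (m + 1 + 1) := by
          apply pow_le_pow_right₀ (by linarith [norm_nonneg a]) (by omega)

lemma norm_fR_le (a : ℂ) (n : ℕ) (hq : ‖q‖ < 1) :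
    ‖fR q a n‖ ≤ (‖a‖ / (1 - ‖q‖)) ^ n * ‖q‖ ^ (n ^ 2) := by
  have hd : (0:ℝ) < 1 - ‖q‖ := by linarith
  rw [fR, norm_div, norm_mul, norm_pow, norm_pow]
  calc ‖a‖ ^ n * ‖q‖ ^ n ^ 2 / ‖qPoch q q n‖
      ≤ ‖a‖ ^ n * ‖q‖ ^ n ^ 2 / (1 - ‖q‖) ^ n := by
        apply div_le_div_of_nonneg_left (by positivity) (by positivity) (norm_qPochq_ge hq n)
    _ = (‖a‖ / (1 - ‖q‖)) ^ n * ‖q‖ ^ n ^ 2 := by rw [div_pow]; ring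

lemma norm_phiR_le (a : ℂ) (n : ℕ) (hq : ‖q‖ < 1) :
    ‖phiR q a n‖ ≤ (1 + ‖a‖) * ((‖a‖ ^ 2 * (1 + ‖a‖)) / (1 - ‖q‖)) ^ n * ‖q‖ ^ En n := by
  have hd : (0:ℝ) < 1 - ‖q‖ := by linarith
  rw [phiR, norm_div]
  rw [norm_mul, norm_mul, norm_mul, norm_pow, norm_pow, norm_pow, norm_neg, norm_one, one_pow,
    one_mul]
  calc ‖a‖ ^ (2 * n) * ‖q‖ ^ En n * ‖VR q a n‖ / ‖qPoch q q n‖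
      ≤ ‖a‖ ^ (2 * n) * ‖q‖ ^ En n * (1 + ‖a‖) ^ (n + 1) / (1 - ‖q‖) ^ n := by
        apply div_le_div₀ (by positivity) _ (by positivity) (norm_qPochq_ge hq n)
        gcongr ‖a‖ ^ (2 * n) * ‖q‖ ^ En n * ?_
        exact norm_VR_le a n hq
    _ = (1 + ‖a‖) * ((‖a‖ ^ 2 * (1 + ‖a‖)) / (1 - ‖q‖)) ^ n * ‖q‖ ^ En n := by
        rw [div_pow, mul_pow, pow_mul]
        field_simp
        ring

lemma norm_CR_le (a : ℂ) (n : ℕ) (hq : ‖q‖ < 1) :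
    ‖CR q a n‖ ≤ ‖a‖ * ((‖a‖ ^ 2 * (1 + ‖a‖)) / (1 - ‖q‖)) ^ n * ‖q‖ ^ (En n + 4 * n + 1) := by
  have hd : (0:ℝ) < 1 - ‖q‖ := by linarith
  rw [CR, norm_div, norm_mul, norm_mul, norm_mul, norm_pow, norm_pow, norm_pow, norm_neg,
    norm_one, one_pow, one_mul]
  calc ‖a‖ ^ (2 * n + 1) * ‖q‖ ^ (En n + 4 * n + 1) * ‖qPoch (a * q) q n‖ / ‖qPoch q q n‖
      ≤ ‖a‖ ^ (2 * n + 1) * ‖q‖ ^ (En n + 4 * n + 1) * (1 + ‖a‖) ^ n / (1 - ‖q‖) ^ n := by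
        apply div_le_div₀ (by positivity) _ (by positivity) (norm_qPochq_ge hq n)
        gcongr ‖a‖ ^ (2 * n + 1) * ‖q‖ ^ (En n + 4 * n + 1) * ?_
        exact norm_aq_poch_le a n hq
    _ = ‖a‖ * ((‖a‖ ^ 2 * (1 + ‖a‖)) / (1 - ‖q‖)) ^ n * ‖q‖ ^ (En n + 4 * n + 1) := by
        rw [div_pow, mul_pow, pow_add ‖a‖ (2*n) 1, pow_mul ‖a‖ 2 n, pow_one]
        field_simp
        try ring

lemma norm_AR_succ_le (a : ℂ) (n : ℕ) (hq : ‖q‖ < 1) :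
    ‖AR q a (n + 1)‖ ≤
      ((2 + ‖a‖) * ‖a‖ ^ 2) * ((‖a‖ ^ 2 * (1 + ‖a‖)) / (1 - ‖q‖)) ^ n * ‖q‖ ^ En (n + 1) := by
  have hd : (0:ℝ) < 1 - ‖q‖ := by linarith
  show ‖(-1) ^ (n + 1) * a ^ (2 * (n + 1)) * q ^ En (n + 1) *
      (1 + q ^ (n + 1) - a * q ^ (2 * (n + 1))) * qPoch (a * q) q n / qPoch q q n‖ ≤ _
  rw [norm_div, norm_mul, norm_mul, norm_mul, norm_mul, norm_pow, norm_pow, norm_pow, norm_neg,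
    norm_one, one_pow, one_mul]
  have h1 : ‖1 + q ^ (n + 1) - a * q ^ (2 * (n + 1))‖ ≤ 2 + ‖a‖ := by
    calc ‖1 + q ^ (n + 1) - a * q ^ (2 * (n + 1))‖
        ≤ ‖(1 : ℂ) + q ^ (n + 1)‖ + ‖a * q ^ (2 * (n + 1))‖ := norm_sub_le _ _
      _ ≤ (‖(1:ℂ)‖ + ‖q ^ (n + 1)‖) + ‖a‖ * ‖q ^ (2 * (n + 1))‖ := by
          rw [norm_mul]; gcongr; exact norm_add_le _ _
      _ ≤ (1 + 1) + ‖a‖ * 1 := by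
          rw [norm_one, norm_pow, norm_pow]
          gcongr
          · exact pow_le_one₀ (norm_nonneg q) hq.le
          · exact pow_le_one₀ (norm_nonneg q) hq.le
      _ = 2 + ‖a‖ := by ring
  calc ‖a‖ ^ (2 * (n + 1)) * ‖q‖ ^ En (n + 1) * ‖1 + q ^ (n + 1) - a * q ^ (2 * (n + 1))‖ *
        ‖qPoch (a * q) q n‖ / ‖qPoch q q n‖
      ≤ ‖a‖ ^ (2 * (n + 1)) * ‖q‖ ^ En (n + 1) * (2 + ‖a‖) * (1 + ‖a‖) ^ n / (1 - ‖q‖) ^ n := by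
        apply div_le_div₀ (by positivity) _ (by positivity) (norm_qPochq_ge hq n)
        gcongr <;> first
          | exact h1
          | exact norm_aq_poch_le a n hq
          | positivity
    _ = ((2 + ‖a‖) * ‖a‖ ^ 2) * ((‖a‖ ^ 2 * (1 + ‖a‖)) / (1 - ‖q‖)) ^ n * ‖q‖ ^ En (n + 1) := by
        rw [div_pow, mul_pow, pow_mul ‖a‖ 2 (n+1), pow_succ]
        field_simp
        try ring

lemma norm_wR_le (a : ℂ) (n : ℕ) (hq : ‖q‖ < 1) :
    ‖wR q a n‖ ≤ ‖a‖ * (‖a‖ / (1 - ‖q‖)) ^ n * ‖q‖ ^ ((n + 1) ^ 2) := by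
  have hd : (0:ℝ) < 1 - ‖q‖ := by linarith
  rw [wR, norm_div, norm_mul, norm_pow, norm_pow]
  calc ‖a‖ ^ (n + 1) * ‖q‖ ^ (n + 1) ^ 2 / ‖qPoch q q n‖
      ≤ ‖a‖ ^ (n + 1) * ‖q‖ ^ (n + 1) ^ 2 / (1 - ‖q‖) ^ n := by
        apply div_le_div_of_nonneg_left (by positivity) (by positivity) (norm_qPochq_ge hq n)
    _ = ‖a‖ * (‖a‖ / (1 - ‖q‖)) ^ n * ‖q‖ ^ ((n + 1) ^ 2) := by
        field_simp
        have h : (1 - ‖q‖) ^ n * (‖a‖ / (1 - ‖q‖)) ^ n = ‖a‖ ^ n := by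
          rw [← mul_pow, mul_div_cancel₀ _ hd.ne']
        linear_combination -(‖q‖ ^ (n + 1) ^ 2 * ‖a‖) * h

end Bounds

/-! ### Summability -/

section Summable

variable {q : ℂ} (hq : ‖q‖ < 1)

lemma hd' (hq : ‖q‖ < 1) : (0:ℝ) < 1 - ‖q‖ := by linarith

lemma hsum_fR (hq : ‖q‖ < 1) (a : ℂ) : Summable (fR q a) := by
  apply Summable.of_norm_bounded (g := fun n => 1 * (‖a‖ / (1 - ‖q‖)) ^ n * ‖q‖ ^ (n ^ 2))
  · apply summable_master (norm_nonneg q) hq 1 _ (div_nonneg (norm_nonneg a) (hd' hq).le)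
    intro n
    have : (n + 1) ^ 2 = n ^ 2 + 2 * n + 1 := by ring
    omega
  · intro n
    simpa using norm_fR_le a n hq

lemma hsum_phiR (hq : ‖q‖ < 1) (a : ℂ) : Summable (phiR q a) := by
  apply Summable.of_norm_bounded
    (g := fun n => (1 + ‖a‖) * ((‖a‖ ^ 2 * (1 + ‖a‖)) / (1 - ‖q‖)) ^ n * ‖q‖ ^ En n)
  · apply summable_master (norm_nonneg q) hq _ _
      (div_nonneg (by positivity) (hd' hq).le)
    intro n
    rw [En_succ]
    omega
  · intro n
    exact norm_phiR_le a n hq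

lemma hsum_CR (hq : ‖q‖ < 1) (a : ℂ) : Summable (CR q a) := by
  apply Summable.of_norm_bounded
    (g := fun n => ‖a‖ * ((‖a‖ ^ 2 * (1 + ‖a‖)) / (1 - ‖q‖)) ^ n * ‖q‖ ^ (En n + 4 * n + 1))
  · apply summable_master (norm_nonneg q) hq _ _
      (div_nonneg (by positivity) (hd' hq).le)
    intro n
    rw [En_succ]
    omega
  · intro n
    exact norm_CR_le a n hq

lemma hsum_AR_succ (hq : ‖q‖ < 1) (a : ℂ) : Summable (fun n => AR q a (n + 1)) := by
  apply Summable.of_norm_bounded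
    (g := fun n => ((2 + ‖a‖) * ‖a‖ ^ 2) * ((‖a‖ ^ 2 * (1 + ‖a‖)) / (1 - ‖q‖)) ^ n *
      ‖q‖ ^ En (n + 1))
  · apply summable_master (norm_nonneg q) hq _ _
      (div_nonneg (by positivity) (hd' hq).le)
    intro n
    rw [En_succ (n + 1)]
    omega
  · intro n
    exact norm_AR_succ_le a n hq

lemma hsum_AR (hq : ‖q‖ < 1) (a : ℂ) : Summable (AR q a) :=
  (summable_nat_add_iff 1).1 (hsum_AR_succ hq a)

end Summable

/-! ### The tsums and functional equations -/

noncomputable def Fs (q a : ℂ) : ℂ := ∑' n, fR q a n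

noncomputable def Phi (q a : ℂ) : ℂ := ∑' n, phiR q a n

section FE

variable {q : ℂ} (hq : ‖q‖ < 1)

lemma fR_zero (a : ℂ) : fR q a 0 = 1 := by simp [fR, qPoch_zero]

lemma phiR_zero (a : ℂ) : phiR q a 0 = 1 := by
  simp [phiR, VR, En, qPoch_zero]

lemma fstep1 (hq : ‖q‖ < 1) (a : ℂ) (n : ℕ) :
    fR q a (n + 1) - fR q (a * q) (n + 1) = wR q a n := by
  have hD := qPochq_ne_zero hq n
  have hE := one_sub_q_pow_ne hq n
  rw [fR, fR, wR, qPoch_succ]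
  have hexp : (n + 1) ^ 2 = n ^ 2 + (2 * n + 1) := by ring
  rw [hexp, pow_add, pow_add]
  field_simp
  ring

lemma fstep2 (a : ℂ) (n : ℕ) :
    a * q * fR q (a * q * q) n = wR q a n := by
  rw [fR, wR]
  have hexp : (n + 1) ^ 2 = n ^ 2 + (2 * n + 1) := by ring
  rw [hexp, pow_add, div_eq_mul_inv, div_eq_mul_inv]
  ring

lemma FE_F (hq : ‖q‖ < 1) (a : ℂ) : Fs q a = Fs q (a * q) + a * q * Fs q (a * q * q) := by
  have h0 := hsum_fR hq a
  have h1 := hsum_fR hq (a * q)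
  have h2 := hsum_fR hq (a * q * q)
  have e0 : Fs q a = 1 + ∑' n, fR q a (n + 1) := by
    rw [Fs, Summable.tsum_eq_zero_add h0, fR_zero]
  have e1 : Fs q (a * q) = 1 + ∑' n, fR q (a * q) (n + 1) := by
    rw [Fs, Summable.tsum_eq_zero_add h1, fR_zero]
  have e2 : (∑' n, fR q a (n + 1)) - ∑' n, fR q (a * q) (n + 1) = a * q * Fs q (a * q * q) := by
    rw [← Summable.tsum_sub ((summable_nat_add_iff 1).2 h0) ((summable_nat_add_iff 1).2 h1)]
    calc ∑' n, (fR q a (n + 1) - fR q (a * q) (n + 1))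
        = ∑' n, a * q * fR q (a * q * q) n :=
          tsum_congr fun n => by rw [fstep1 hq a n, ← fstep2 a n]
      _ = a * q * Fs q (a * q * q) := by rw [Fs, tsum_mul_left]
  linear_combination e0 - e1 + e2

lemma hrel1 (a : ℂ) (n : ℕ) :
    (1 - a * q) * qPoch (a * q * q) q n = qPoch (a * q) q n * (1 - a * q * q ^ n) := by
  have h1 := qPoch_succ' (a * q) q n
  have h2 := qPoch_succ (a * q) q n
  rw [← h1]
  exact h2

lemma hrel2 (a : ℂ) (n : ℕ) :
    (1 - a * q) * ((1 - a * q * q) * qPoch (a * q * q * q) q n) =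
      qPoch (a * q) q n * (1 - a * q * q ^ n) * (1 - a * q * q ^ (n + 1)) := by
  have h1 := qPoch_succ' (a * q) q (n + 1)
  have h2 := qPoch_succ' (a * q * q) q n
  have h3 := qPoch_succ (a * q) q (n + 1)
  have h4 := qPoch_succ (a * q) q n
  rw [h2] at h1
  rw [← h1, h3, h4]
  try ring

lemma T1 (hq : ‖q‖ < 1) (a : ℂ) (n : ℕ) :
    phiR q a n - (1 - a * q) * phiR q (a * q) n = AR q a n + CR q a n := by
  cases n with
  | zero =>
    rw [phiR_zero, phiR_zero]
    show 1 - (1 - a * q) * 1 = 0 + CR q a 0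
    rw [CR]
    simp [En, qPoch_zero]
  | succ n =>
    have hD := qPochq_ne_zero hq n
    have hE := one_sub_q_pow_ne hq n
    have t1 : phiR q a (n + 1) =
        ((-1) ^ (n + 1) * a ^ (2 * (n + 1)) * q ^ En (n + 1) *
          ((1 - a * q ^ (2 * (n + 1))) * qPoch (a * q) q n)) /
          (qPoch q q n * (1 - q * q ^ n)) := by
      rw [phiR, qPoch_succ]
      rfl
    have t2 : (1 - a * q) * phiR q (a * q) (n + 1) =
        ((-1) ^ (n + 1) * (a * q) ^ (2 * (n + 1)) * q ^ En (n + 1) *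
          ((1 - a * q * q ^ (2 * (n + 1))) * (qPoch (a * q) q n * (1 - a * q * q ^ n)))) /
          (qPoch q q n * (1 - q * q ^ n)) := by
      rw [phiR, qPoch_succ]
      show (1 - a * q) * ((-1) ^ (n + 1) * (a * q) ^ (2 * (n + 1)) * q ^ En (n + 1) *
        ((1 - a * q * q ^ (2 * (n + 1))) * qPoch (a * q * q) q n) /
        (qPoch q q n * (1 - q * q ^ n))) = _
      have hr := hrel1 (q := q) a n
      linear_combination ((-1) ^ (n + 1) * (a * q) ^ (2 * (n + 1)) * q ^ En (n + 1) *
        (1 - a * q * q ^ (2 * (n + 1)))) / (qPoch q q n * (1 - q * q ^ n)) * hr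
    have t3 : AR q a (n + 1) =
        ((-1) ^ (n + 1) * a ^ (2 * (n + 1)) * q ^ En (n + 1) *
          ((1 + q ^ (n + 1) - a * q ^ (2 * (n + 1))) * (qPoch (a * q) q n * (1 - q * q ^ n)))) /
          (qPoch q q n * (1 - q * q ^ n)) := by
      show ((-1) ^ (n + 1) * a ^ (2 * (n + 1)) * q ^ En (n + 1) *
          (1 + q ^ (n + 1) - a * q ^ (2 * (n + 1))) * qPoch (a * q) q n / qPoch q q n) = _
      field_simp
    have t4 : CR q a (n + 1) =
        ((-1) ^ (n + 1) * a ^ (2 * (n + 1) + 1) * (q ^ En (n + 1) * q ^ (4 * (n + 1) + 1)) *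
          (qPoch (a * q) q n * (1 - a * q * q ^ n))) /
          (qPoch q q n * (1 - q * q ^ n)) := by
      rw [CR, qPoch_succ, qPoch_succ, ← pow_add]
      rfl
    rw [t1, t2, t3, t4, div_sub_div_same, ← add_div]
    congr 1
    ring

lemma T2 (hq : ‖q‖ < 1) (a : ℂ) (n : ℕ) :
    a * q * (1 - a * q) * (1 - a * q * q) * phiR q (a * q * q) n =
      AR q a (n + 1) + CR q a n := by
  cases n with
  | zero =>
    rw [phiR_zero]
    show _ = (-1) ^ (0 + 1) * a ^ (2 * (0 + 1)) * q ^ En (0 + 1) *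
      (1 + q ^ (0 + 1) - a * q ^ (2 * (0 + 1))) * qPoch (a * q) q 0 / qPoch q q 0 + CR q a 0
    rw [CR]
    have hEn1 : En 1 = 2 := by decide
    simp only [hEn1, En, qPoch_zero]
    norm_num
    ring
  | succ n =>
    have hD := qPochq_ne_zero hq n
    have hE := one_sub_q_pow_ne hq n
    have hEn2 : En (n + 2) = En (n + 1) + (5 * n + 7) := by
      rw [En_succ (n + 1)]
      omega
    have lhs : a * q * (1 - a * q) * (1 - a * q * q) * phiR q (a * q * q) (n + 1) =
        (a * q * ((-1) ^ (n + 1) * (a * q * q) ^ (2 * (n + 1)) * q ^ En (n + 1) *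
          ((1 - a * q * q * q ^ (2 * (n + 1))) *
            (qPoch (a * q) q n * (1 - a * q * q ^ n) * (1 - a * q * q ^ (n + 1)))))) /
          (qPoch q q n * (1 - q * q ^ n)) := by
      rw [phiR, qPoch_succ]
      show a * q * (1 - a * q) * (1 - a * q * q) * ((-1) ^ (n + 1) * (a * q * q) ^ (2 * (n + 1)) *
        q ^ En (n + 1) * ((1 - a * q * q * q ^ (2 * (n + 1))) * qPoch (a * q * q * q) q n) /
        (qPoch q q n * (1 - q * q ^ n))) = _
      have hr := hrel2 (q := q) a n
      linear_combination (a * q * ((-1) ^ (n + 1) * (a * q * q) ^ (2 * (n + 1)) * q ^ En (n + 1) *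
        (1 - a * q * q * q ^ (2 * (n + 1))))) / (qPoch q q n * (1 - q * q ^ n)) * hr
    have t3 : AR q a (n + 2) =
        ((-1) ^ (n + 2) * a ^ (2 * (n + 2)) * (q ^ En (n + 1) * q ^ (5 * n + 7)) *
          ((1 + q ^ (n + 2) - a * q ^ (2 * (n + 2))) *
            (qPoch (a * q) q n * (1 - a * q * q ^ n)))) /
          (qPoch q q n * (1 - q * q ^ n)) := by
      show ((-1) ^ (n + 2) * a ^ (2 * (n + 2)) * q ^ En (n + 2) *
          (1 + q ^ (n + 2) - a * q ^ (2 * (n + 2))) * qPoch (a * q) q (n + 1) /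
            qPoch q q (n + 1)) = _
      rw [qPoch_succ, qPoch_succ, hEn2, pow_add]
      field_simp
      ring
    have t4 : CR q a (n + 1) =
        ((-1) ^ (n + 1) * a ^ (2 * (n + 1) + 1) * (q ^ En (n + 1) * q ^ (4 * (n + 1) + 1)) *
          (qPoch (a * q) q n * (1 - a * q * q ^ n))) /
          (qPoch q q n * (1 - q * q ^ n)) := by
      rw [CR, qPoch_succ, qPoch_succ, ← pow_add]
      rfl
    rw [lhs, t3, t4, ← add_div]
    congr 1
    ring

lemma FE_Phi (hq : ‖q‖ < 1) (a : ℂ) :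
    Phi q a = (1 - a * q) * Phi q (a * q) +
      a * q * (1 - a * q) * (1 - a * q * q) * Phi q (a * q * q) := by
  have hpa := hsum_phiR hq a
  have hpaq := hsum_phiR hq (a * q)
  have hA := hsum_AR hq a
  have hA1 := hsum_AR_succ hq a
  have hC := hsum_CR hq a
  have s1 : Phi q a - (1 - a * q) * Phi q (a * q) = ∑' n, (AR q a n + CR q a n) := by
    simp only [Phi]
    rw [← tsum_mul_left, ← Summable.tsum_sub hpa (hpaq.mul_left _)]
    exact tsum_congr (T1 hq a)
  have s2 : ∑' n, (AR q a n + CR q a n) = (∑' n, AR q a n) + ∑' n, CR q a n :=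
    Summable.tsum_add hA hC
  have s3 : ∑' n, AR q a n = ∑' n, AR q a (n + 1) := by
    rw [Summable.tsum_eq_zero_add hA]
    have h0 : AR q a 0 = 0 := rfl
    rw [h0, zero_add]
  have s4 : (∑' n, AR q a (n + 1)) + (∑' n, CR q a n) = ∑' n, (AR q a (n + 1) + CR q a n) :=
    (Summable.tsum_add hA1 hC).symm
  have s5 : ∑' n, (AR q a (n + 1) + CR q a n) =
      a * q * (1 - a * q) * (1 - a * q * q) * Phi q (a * q * q) := by
    rw [Phi, ← tsum_mul_left]
    exact tsum_congr fun n => (T2 hq a n).symm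
  linear_combination s1 + s2 + s3 + s4 + s5

end FE

/-! ### The infinite product -/

section Prod

variable {q : ℂ}

lemma multQ (hq : ‖q‖ < 1) (x : ℂ) : Multipliable (fun j : ℕ => 1 - x * q ^ j) := by
  by_cases h0 : ∃ j : ℕ, 1 - x * q ^ j = 0
  · obtain ⟨j0, hj0⟩ := h0
    refine ⟨0, ?_⟩
    have hev : ∀ᶠ s : Finset ℕ in atTop, ∏ i ∈ s, (1 - x * q ^ i) = (0 : ℂ) := by
      filter_upwards [Filter.eventually_ge_atTop ({j0} : Finset ℕ)] with s hs
      exact Finset.prod_eq_zero (hs (Finset.mem_singleton_self j0)) hj0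
    exact (tendsto_const_nhds).congr' (hev.mono fun s hs => hs.symm)
  · push_neg at h0
    have hs : Summable (fun j : ℕ => Complex.log (1 - x * q ^ j)) := by
      have hgeo : Summable (fun j : ℕ => (3 / 2 : ℝ) * (‖x‖ * ‖q‖ ^ j)) :=
        (((summable_geometric_of_lt_one (norm_nonneg q) hq).mul_left ‖x‖).mul_left _)
      apply Summable.of_norm_bounded_eventually_nat hgeo
      have htend : Tendsto (fun j : ℕ => ‖x‖ * ‖q‖ ^ j) atTop (𝓝 0) := by
        simpa using (tendsto_pow_atTop_nhds_zero_of_lt_one (norm_nonneg q) hq).const_mul ‖x‖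
      filter_upwards [htend.eventually (eventually_le_nhds (by norm_num : (0:ℝ) < 1/2))]
        with j hj
      have hz : ‖-(x * q ^ j)‖ ≤ 1 / 2 := by
        rw [norm_neg, norm_mul, norm_pow]; exact hj
      have := Complex.norm_log_one_add_half_le_self hz
      rw [show (1 : ℂ) + -(x * q ^ j) = 1 - x * q ^ j by ring] at this
      calc ‖Complex.log (1 - x * q ^ j)‖ ≤ 3 / 2 * ‖-(x * q ^ j)‖ := this
        _ = 3 / 2 * (‖x‖ * ‖q‖ ^ j) := by rw [norm_neg, norm_mul, norm_pow]
    exact Complex.multipliable_of_summable_log hs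

lemma Q_shift (hq : ‖q‖ < 1) (x : ℂ) : qPochInf x q = (1 - x) * qPochInf (x * q) q := by
  have hshift : Multipliable (fun n : ℕ => 1 - x * q ^ (n + 1)) := by
    apply (multQ hq (x * q)).congr
    intro b
    rw [pow_succ']
    ring
  have h := tprod_eq_zero_mul' (f := fun j : ℕ => 1 - x * q ^ j) hshift
  rw [qPochInf, h]
  congr 1
  · simp
  · rw [qPochInf]
    apply tprod_congr
    intro j
    show 1 - x * q ^ (j + 1) = 1 - x * q * q ^ j
    rw [pow_succ']
    ring

lemma qPoch_sub_one_norm_le (x : ℂ) (hq : ‖q‖ < 1) (m : ℕ) :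
    ‖qPoch x q m - 1‖ ≤ Real.exp (‖x‖ / (1 - ‖q‖)) - 1 := by
  have hd : (0:ℝ) < 1 - ‖q‖ := by linarith
  have claim : ∀ m : ℕ, ‖qPoch x q m - 1‖ ≤
      Real.exp (∑ j ∈ Finset.range m, ‖x‖ * ‖q‖ ^ j) - 1 := by
    intro m
    induction m with
    | zero => simp [qPoch_zero]
    | succ k ih =>
      set t := ‖x‖ * ‖q‖ ^ k with ht
      have ht0 : 0 ≤ t := by positivity
      set S := ∑ j ∈ Finset.range k, ‖x‖ * ‖q‖ ^ j with hS
      have hS0 : 0 ≤ S := by positivity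
      have h1 : ‖qPoch x q (k + 1) - 1‖ ≤ ‖qPoch x q k - 1‖ * (1 + t) + t := by
        rw [qPoch_succ]
        have he : qPoch x q k * (1 - x * q ^ k) - 1 =
            (qPoch x q k - 1) * (1 - x * q ^ k) - x * q ^ k := by ring
        rw [he]
        calc ‖(qPoch x q k - 1) * (1 - x * q ^ k) - x * q ^ k‖
            ≤ ‖(qPoch x q k - 1) * (1 - x * q ^ k)‖ + ‖x * q ^ k‖ := norm_sub_le _ _
          _ ≤ ‖qPoch x q k - 1‖ * (1 + t) + t := by
              rw [norm_mul]
              have h2 : ‖x * q ^ k‖ = t := by rw [norm_mul, norm_pow]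
              have h3 : ‖1 - x * q ^ k‖ ≤ 1 + t := by
                calc ‖1 - x * q ^ k‖ ≤ ‖(1:ℂ)‖ + ‖x * q ^ k‖ := norm_sub_le _ _
                  _ = 1 + t := by rw [norm_one, h2]
              exact add_le_add (mul_le_mul_of_nonneg_left h3 (norm_nonneg _)) h2.le
      rw [Finset.sum_range_succ, ← hS, ← ht]
      have hexp : 1 + t ≤ Real.exp t := by linarith [Real.add_one_le_exp t]
      calc ‖qPoch x q (k + 1) - 1‖ ≤ ‖qPoch x q k - 1‖ * (1 + t) + t := h1
        _ ≤ (Real.exp S - 1) * (1 + t) + t := by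
            have := Real.add_one_le_exp S
            gcongr
        _ = Real.exp S * (1 + t) - 1 - t + t := by ring
        _ ≤ Real.exp S * Real.exp t - 1 - t + t := by
            have h4 : Real.exp S * (1 + t) ≤ Real.exp S * Real.exp t :=
              mul_le_mul_of_nonneg_left hexp (Real.exp_pos S).le
            linarith
        _ = Real.exp (S + t) - 1 := by rw [← Real.exp_add]; ring
  refine (claim m).trans ?_
  have hsum : ∑ j ∈ Finset.range m, ‖x‖ * ‖q‖ ^ j ≤ ‖x‖ / (1 - ‖q‖) := by
    rw [← Finset.mul_sum]
    have hg : ∑ j ∈ Finset.range m, ‖q‖ ^ j ≤ (1 - ‖q‖)⁻¹ := by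
      apply Summable.sum_le_tsum _ (fun j _ => by positivity)
        (summable_geometric_of_lt_one (norm_nonneg q) hq) |>.trans
      rw [tsum_geometric_of_lt_one (norm_nonneg q) hq]
    calc ‖x‖ * ∑ j ∈ Finset.range m, ‖q‖ ^ j ≤ ‖x‖ * (1 - ‖q‖)⁻¹ :=
          mul_le_mul_of_nonneg_left hg (norm_nonneg x)
      _ = ‖x‖ / (1 - ‖q‖) := by rw [div_eq_mul_inv]
  gcongr

lemma qPochInf_eq_lim (hq : ‖q‖ < 1) (x : ℂ) :
    Tendsto (fun m => qPoch x q m) atTop (𝓝 (qPochInf x q)) := by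
  have := (multQ hq x).hasProd.tendsto_prod_nat
  exact this

lemma Q_sub_one_norm_le (hq : ‖q‖ < 1) (x : ℂ) :
    ‖qPochInf x q - 1‖ ≤ Real.exp (‖x‖ / (1 - ‖q‖)) - 1 := by
  have ht2 : Tendsto (fun m => ‖qPoch x q m - 1‖) atTop (𝓝 ‖qPochInf x q - 1‖) :=
    ((qPochInf_eq_lim hq x).sub_const 1).norm
  exact le_of_tendsto ht2 (Filter.Eventually.of_forall fun m => qPoch_sub_one_norm_le x hq m)

lemma Q_split (hq : ‖q‖ < 1) (x : ℂ) (m : ℕ) :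
    qPochInf x q = qPoch x q m * qPochInf (x * q ^ m) q := by
  induction m with
  | zero => simp [qPoch_zero]
  | succ k ih =>
    calc qPochInf x q = qPoch x q k * qPochInf (x * q ^ k) q := ih
      _ = qPoch x q k * ((1 - x * q ^ k) * qPochInf (x * q ^ k * q) q) := by
          rw [← Q_shift hq]
      _ = qPoch x q (k + 1) * qPochInf (x * q ^ (k + 1)) q := by
          rw [qPoch_succ, show x * q ^ k * q = x * q ^ (k + 1) by rw [pow_succ]; ring]
          ring

lemma exp_quarter_lt_two : Real.exp (1 / 4) < 2 := by
  have h1 : Real.exp 1 < 2.7182818286 := Real.exp_one_lt_d9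
  have h2 : Real.exp 1 = (Real.exp (1 / 4)) ^ 4 := by
    rw [← Real.exp_nat_mul]
    norm_num
  by_contra hcon
  push_neg at hcon
  have h3 : (2:ℝ) ^ 4 ≤ (Real.exp (1 / 4)) ^ 4 := pow_le_pow_left₀ (by norm_num) hcon 4
  rw [← h2] at h3
  norm_num at h3
  linarith

lemma Q_ne_zero (hq : ‖q‖ < 1) (x : ℂ) (hx : ∀ j : ℕ, 1 - x * q ^ j ≠ 0) :
    qPochInf x q ≠ 0 := by
  have hd : (0:ℝ) < 1 - ‖q‖ := by linarith
  obtain ⟨m, hm⟩ : ∃ m : ℕ, ‖x * q ^ m‖ / (1 - ‖q‖) ≤ 1 / 4 := by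
    have htend : Tendsto (fun m : ℕ => ‖x‖ * ‖q‖ ^ m / (1 - ‖q‖)) atTop (𝓝 0) := by
      have h0 : Tendsto (fun m : ℕ => ‖x‖ * ‖q‖ ^ m) atTop (𝓝 0) := by
        simpa using (tendsto_pow_atTop_nhds_zero_of_lt_one (norm_nonneg q) hq).const_mul ‖x‖
      simpa using h0.div_const (1 - ‖q‖)
    obtain ⟨m, hm⟩ := (htend.eventually
      (eventually_le_nhds (by norm_num : (0:ℝ) < 1/4))).exists
    exact ⟨m, by rwa [norm_mul, norm_pow]⟩
  have htail : qPochInf (x * q ^ m) q ≠ 0 := by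
    intro h
    have hb := Q_sub_one_norm_le hq (x * q ^ m)
    rw [h] at hb
    have h1 : ‖(0 : ℂ) - 1‖ = 1 := by simp
    rw [h1] at hb
    have h2 : Real.exp (‖x * q ^ m‖ / (1 - ‖q‖)) ≤ Real.exp (1 / 4) :=
      Real.exp_le_exp.mpr hm
    linarith [exp_quarter_lt_two]
  have hfin : qPoch x q m ≠ 0 := by
    rw [qPoch]
    exact Finset.prod_ne_zero_iff.mpr fun j _ => hx j
  rw [Q_split hq x m]
  exact mul_ne_zero hfin htail

end Prod

/-! ### The error function E and its bound -/

noncomputable def Er (q a : ℂ) : ℂ := qPochInf (a * q) q * Fs q a - Phi q a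

section Efun

variable {q : ℂ}

lemma FE_E (hq : ‖q‖ < 1) (a : ℂ) :
    Er q a = (1 - a * q) * Er q (a * q) +
      a * q * (1 - a * q) * (1 - a * q * q) * Er q (a * q * q) := by
  have hP1 : qPochInf (a * q) q = (1 - a * q) * qPochInf (a * q * q) q := Q_shift hq (a * q)
  have hP2 : qPochInf (a * q * q) q = (1 - a * q * q) * qPochInf (a * q * q * q) q :=
    Q_shift hq (a * q * q)
  have hF := FE_F hq a
  have hPhi := FE_Phi hq a
  simp only [Er]
  rw [hF, hPhi, hP1, hP2]
  ring

noncomputable def KF (q : ℂ) : ℝ :=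
  ∑' n : ℕ, (1 / (1 - ‖q‖)) * (1 / (1 - ‖q‖)) ^ n * ‖q‖ ^ ((n + 1) ^ 2)

noncomputable def KPhi (q : ℂ) : ℝ :=
  ∑' n : ℕ, (4 / (1 - ‖q‖)) * (2 / (1 - ‖q‖)) ^ n * ‖q‖ ^ En (n + 1)

noncomputable def KP (q : ℂ) : ℝ := (‖q‖ / (1 - ‖q‖)) * Real.exp (‖q‖ / (1 - ‖q‖))

noncomputable def KE (q : ℂ) : ℝ := (1 + KP q) * KF q + KP q + KPhi q

lemma sumKF (hq : ‖q‖ < 1) :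
    Summable (fun n : ℕ => (1 / (1 - ‖q‖)) * (1 / (1 - ‖q‖)) ^ n * ‖q‖ ^ ((n + 1) ^ 2)) := by
  apply summable_master (norm_nonneg q) hq _ _ (div_nonneg one_pos.le (hd' hq).le)
  intro n
  have h : (n + 1 + 1) ^ 2 = (n + 1) ^ 2 + 2 * n + 3 := by ring
  omega

lemma sumKPhi (hq : ‖q‖ < 1) :
    Summable (fun n : ℕ => (4 / (1 - ‖q‖)) * (2 / (1 - ‖q‖)) ^ n * ‖q‖ ^ En (n + 1)) := by
  apply summable_master (norm_nonneg q) hq _ _ (div_nonneg (by norm_num) (hd' hq).le)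
  intro n
  have h := En_succ (n + 1)
  omega

lemma KF_nonneg (hq : ‖q‖ < 1) : 0 ≤ KF q := by
  apply tsum_nonneg
  intro n
  have hd := hd' hq
  have h1 : (0:ℝ) ≤ 1 / (1 - ‖q‖) := div_nonneg one_pos.le hd.le
  exact mul_nonneg (mul_nonneg h1 (pow_nonneg h1 n)) (pow_nonneg (norm_nonneg q) _)

lemma KPhi_nonneg (hq : ‖q‖ < 1) : 0 ≤ KPhi q := by
  apply tsum_nonneg
  intro n
  have hd := hd' hq
  have h1 : (0:ℝ) ≤ 4 / (1 - ‖q‖) := div_nonneg (by norm_num) hd.le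
  have h2 : (0:ℝ) ≤ 2 / (1 - ‖q‖) := div_nonneg (by norm_num) hd.le
  exact mul_nonneg (mul_nonneg h1 (pow_nonneg h2 n)) (pow_nonneg (norm_nonneg q) _)

lemma KP_nonneg (hq : ‖q‖ < 1) : 0 ≤ KP q := by
  have hd := hd' hq
  have h1 : (0:ℝ) ≤ ‖q‖ / (1 - ‖q‖) := div_nonneg (norm_nonneg q) hd.le
  exact mul_nonneg h1 (Real.exp_pos _).le

lemma KE_nonneg (hq : ‖q‖ < 1) : 0 ≤ KE q := by
  have := KF_nonneg hq
  have := KPhi_nonneg hq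
  have := KP_nonneg hq
  unfold KE
  nlinarith

lemma bndF1 (hq : ‖q‖ < 1) (a : ℂ) (ha1 : ‖a‖ ≤ 1) : ‖Fs q a - 1‖ ≤ KF q * ‖a‖ := by
  have hd := hd' hq
  have hsf := hsum_fR hq a
  have hsh : Summable (fun n => fR q a (n + 1)) := (summable_nat_add_iff 1).2 hsf
  have e0 : Fs q a - 1 = ∑' n, fR q a (n + 1) := by
    rw [Fs, Summable.tsum_eq_zero_add hsf, fR_zero]
    ring
  rw [e0]
  have hbd : ∀ n : ℕ, ‖fR q a (n + 1)‖ ≤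
      ‖a‖ * ((1 / (1 - ‖q‖)) * (1 / (1 - ‖q‖)) ^ n * ‖q‖ ^ ((n + 1) ^ 2)) := by
    intro n
    refine (norm_fR_le a (n + 1) hq).trans ?_
    rw [div_pow]
    have h1 : ‖a‖ ^ (n + 1) ≤ ‖a‖ :=
      pow_le_of_le_one (norm_nonneg a) ha1 (Nat.succ_ne_zero n)
    calc ‖a‖ ^ (n + 1) / (1 - ‖q‖) ^ (n + 1) * ‖q‖ ^ ((n + 1) ^ 2)
        ≤ ‖a‖ / (1 - ‖q‖) ^ (n + 1) * ‖q‖ ^ ((n + 1) ^ 2) := by gcongr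
      _ = ‖a‖ * ((1 / (1 - ‖q‖)) * (1 / (1 - ‖q‖)) ^ n * ‖q‖ ^ ((n + 1) ^ 2)) := by
          rw [div_pow, pow_succ]
          field_simp
          try ring
  calc ‖∑' n, fR q a (n + 1)‖ ≤ ∑' n, ‖fR q a (n + 1)‖ :=
        norm_tsum_le_tsum_norm (summable_norm_iff.mpr hsh)
    _ ≤ ∑' n, ‖a‖ * ((1 / (1 - ‖q‖)) * (1 / (1 - ‖q‖)) ^ n * ‖q‖ ^ ((n + 1) ^ 2)) :=
        Summable.tsum_le_tsum hbd (summable_norm_iff.mpr hsh) ((sumKF hq).mul_left ‖a‖)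
    _ = KF q * ‖a‖ := by rw [tsum_mul_left, KF]; ring

lemma bndPhi1 (hq : ‖q‖ < 1) (a : ℂ) (ha1 : ‖a‖ ≤ 1) : ‖Phi q a - 1‖ ≤ KPhi q * ‖a‖ := by
  have hd := hd' hq
  have hsf := hsum_phiR hq a
  have hsh : Summable (fun n => phiR q a (n + 1)) := (summable_nat_add_iff 1).2 hsf
  have e0 : Phi q a - 1 = ∑' n, phiR q a (n + 1) := by
    rw [Phi, Summable.tsum_eq_zero_add hsf, phiR_zero]
    ring
  rw [e0]
  have ha0 := norm_nonneg a
  have hbd : ∀ n : ℕ, ‖phiR q a (n + 1)‖ ≤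
      ‖a‖ * ((4 / (1 - ‖q‖)) * (2 / (1 - ‖q‖)) ^ n * ‖q‖ ^ En (n + 1)) := by
    intro n
    refine (norm_phiR_le a (n + 1) hq).trans ?_
    have h1 : (1 + ‖a‖) ≤ 2 := by linarith
    have h2 : (‖a‖ ^ 2 * (1 + ‖a‖)) ^ (n + 1) ≤ ‖a‖ * 2 ^ (n + 1) := by
      calc (‖a‖ ^ 2 * (1 + ‖a‖)) ^ (n + 1) ≤ (2 * ‖a‖) ^ (n + 1) := by
            apply pow_le_pow_left₀ (by positivity)
            nlinarith
        _ = 2 ^ (n + 1) * ‖a‖ ^ (n + 1) := by rw [mul_pow]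
        _ ≤ 2 ^ (n + 1) * ‖a‖ :=
            mul_le_mul_of_nonneg_left
              (pow_le_of_le_one ha0 ha1 (Nat.succ_ne_zero n)) (by positivity)
        _ = ‖a‖ * 2 ^ (n + 1) := by ring
    calc (1 + ‖a‖) * (‖a‖ ^ 2 * (1 + ‖a‖) / (1 - ‖q‖)) ^ (n + 1) * ‖q‖ ^ En (n + 1)
        = (1 + ‖a‖) * ((‖a‖ ^ 2 * (1 + ‖a‖)) ^ (n + 1) / (1 - ‖q‖) ^ (n + 1)) *
            ‖q‖ ^ En (n + 1) := by rw [div_pow]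
      _ ≤ 2 * ((‖a‖ * 2 ^ (n + 1)) / (1 - ‖q‖) ^ (n + 1)) * ‖q‖ ^ En (n + 1) := by
          gcongr
      _ = ‖a‖ * ((4 / (1 - ‖q‖)) * (2 / (1 - ‖q‖)) ^ n * ‖q‖ ^ En (n + 1)) := by
          rw [div_pow, pow_succ]
          field_simp
          ring
  calc ‖∑' n, phiR q a (n + 1)‖ ≤ ∑' n, ‖phiR q a (n + 1)‖ :=
        norm_tsum_le_tsum_norm (summable_norm_iff.mpr hsh)
    _ ≤ ∑' n, ‖a‖ * ((4 / (1 - ‖q‖)) * (2 / (1 - ‖q‖)) ^ n * ‖q‖ ^ En (n + 1)) :=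
        Summable.tsum_le_tsum hbd (summable_norm_iff.mpr hsh) ((sumKPhi hq).mul_left ‖a‖)
    _ = KPhi q * ‖a‖ := by rw [tsum_mul_left, KPhi]; ring

lemma exp_sub_one_le {t : ℝ} (ht : 0 ≤ t) : Real.exp t - 1 ≤ t * Real.exp t := by
  have h1 : 1 - t ≤ (Real.exp t)⁻¹ := by
    rw [← Real.exp_neg]
    linarith [Real.add_one_le_exp (-t)]
  have h2 := mul_le_mul_of_nonneg_right h1 (Real.exp_pos t).le
  rw [inv_mul_cancel₀ (Real.exp_pos t).ne'] at h2
  nlinarith [h2]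

lemma bndP1 (hq : ‖q‖ < 1) (a : ℂ) (ha1 : ‖a‖ ≤ 1) :
    ‖qPochInf (a * q) q - 1‖ ≤ KP q * ‖a‖ := by
  have hd := hd' hq
  have haq : ‖a * q‖ = ‖a‖ * ‖q‖ := norm_mul a q
  set u := ‖a * q‖ / (1 - ‖q‖) with hu
  have hu0 : 0 ≤ u := div_nonneg (norm_nonneg _) hd.le
  have huq : u ≤ ‖q‖ / (1 - ‖q‖) := by
    rw [hu, haq]
    gcongr
    calc ‖a‖ * ‖q‖ ≤ 1 * ‖q‖ := mul_le_mul_of_nonneg_right ha1 (norm_nonneg q)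
      _ = ‖q‖ := one_mul _
  calc ‖qPochInf (a * q) q - 1‖ ≤ Real.exp u - 1 := Q_sub_one_norm_le hq (a * q)
    _ ≤ u * Real.exp u := exp_sub_one_le hu0
    _ ≤ u * Real.exp (‖q‖ / (1 - ‖q‖)) :=
        mul_le_mul_of_nonneg_left (Real.exp_le_exp.mpr huq) hu0
    _ = ‖a‖ * ((‖q‖ / (1 - ‖q‖)) * Real.exp (‖q‖ / (1 - ‖q‖))) := by
        rw [hu, haq]
        field_simp
    _ = KP q * ‖a‖ := by rw [KP]; ring

lemma bndE (hq : ‖q‖ < 1) (a : ℂ) (ha1 : ‖a‖ ≤ 1) : ‖Er q a‖ ≤ KE q * ‖a‖ := by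
  have hKP := KP_nonneg hq
  have hKF := KF_nonneg hq
  have hKPhi := KPhi_nonneg hq
  have ha0 := norm_nonneg a
  have key : Er q a = qPochInf (a * q) q * (Fs q a - 1) +
      ((qPochInf (a * q) q - 1) - (Phi q a - 1)) := by
    rw [Er]; ring
  have hP1 := bndP1 hq a ha1
  have hP : ‖qPochInf (a * q) q‖ ≤ 1 + KP q := by
    have h1 : qPochInf (a * q) q = (qPochInf (a * q) q - 1) + 1 := by ring
    calc ‖qPochInf (a * q) q‖ = ‖(qPochInf (a * q) q - 1) + 1‖ := by rw [← h1]
      _ ≤ ‖qPochInf (a * q) q - 1‖ + ‖(1 : ℂ)‖ := norm_add_le _ _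
      _ ≤ KP q * ‖a‖ + 1 := by rw [norm_one]; gcongr
      _ ≤ KP q * 1 + 1 := by gcongr
      _ = 1 + KP q := by ring
  calc ‖Er q a‖ ≤ ‖qPochInf (a * q) q * (Fs q a - 1)‖ +
        ‖(qPochInf (a * q) q - 1) - (Phi q a - 1)‖ := by rw [key]; exact norm_add_le _ _
    _ ≤ ‖qPochInf (a * q) q‖ * ‖Fs q a - 1‖ + (‖qPochInf (a * q) q - 1‖ + ‖Phi q a - 1‖) := by
        rw [norm_mul]
        exact add_le_add le_rfl (norm_sub_le _ _)
    _ ≤ (1 + KP q) * (KF q * ‖a‖) + (KP q * ‖a‖ + KPhi q * ‖a‖) := by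
        apply add_le_add
        · exact mul_le_mul hP (bndF1 hq a ha1) (norm_nonneg _) (by linarith)
        · exact add_le_add hP1 (bndPhi1 hq a ha1)
    _ = KE q * ‖a‖ := by rw [KE]; ring

lemma main_ind (hq : ‖q‖ < 1) (R : ℝ) (hR : 1 ≤ R) (N : ℕ) (hRN : R * ‖q‖ ^ N ≤ 1) :
    ∀ i, i ≤ N → ∀ a : ℂ, ‖a‖ ≤ R * ‖q‖ ^ (N - i) →
      ‖Er q a‖ ≤ KE q * R * ‖q‖ ^ N *
        Real.exp ((R * (1 + (1 + R) ^ 2)) * ∑ k ∈ Finset.range i, ‖q‖ ^ (N - k)) := by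
  have hKE := KE_nonneg hq
  have hq0 := norm_nonneg q
  have hR0 : (0:ℝ) < R := lt_of_lt_of_le one_pos hR
  set c := R * (1 + (1 + R) ^ 2) with hc
  have hc0 : 0 ≤ c := by positivity
  intro i
  induction i with
  | zero =>
    intro _ a ha
    simp only [Finset.range_zero, Finset.sum_empty, mul_zero, Real.exp_zero, mul_one]
    rw [Nat.sub_zero] at ha
    have h1 : ‖a‖ ≤ 1 := ha.trans hRN
    calc ‖Er q a‖ ≤ KE q * ‖a‖ := bndE hq a h1
      _ ≤ KE q * (R * ‖q‖ ^ N) := mul_le_mul_of_nonneg_left ha hKE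
      _ = KE q * R * ‖q‖ ^ N := by ring
  | succ i ih =>
    intro hi a ha
    have hiN : i ≤ N := Nat.le_of_succ_le hi
    have hNi : N - i = (N - (i + 1)) + 1 := by omega
    have haq : ‖a * q‖ ≤ R * ‖q‖ ^ (N - i) := by
      rw [norm_mul, hNi, pow_succ, ← mul_assoc]
      exact mul_le_mul_of_nonneg_right ha hq0
    have haq2 : ‖a * q * q‖ ≤ R * ‖q‖ ^ (N - i) := by
      calc ‖a * q * q‖ = ‖a * q‖ * ‖q‖ := norm_mul _ q
        _ ≤ (R * ‖q‖ ^ (N - i)) * 1 :=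
            mul_le_mul haq hq.le hq0 (by positivity)
        _ = R * ‖q‖ ^ (N - i) := mul_one _
    have h1 := ih hiN (a * q) haq
    have h2 := ih hiN (a * q * q) haq2
    set S := ∑ k ∈ Finset.range i, ‖q‖ ^ (N - k) with hS
    set Bi := KE q * R * ‖q‖ ^ N * Real.exp (c * S) with hBi
    have hBi0 : 0 ≤ Bi := by positivity
    have hruniv : ‖q‖ ^ (N - i) ≤ 1 := pow_le_one₀ hq0 hq.le
    have haqR : ‖a * q‖ ≤ R := haq.trans (by nlinarith)
    have haq2R : ‖a * q * q‖ ≤ R := haq2.trans (by nlinarith)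
    have hn1 : ‖1 - a * q‖ ≤ 1 + R := by
      calc ‖1 - a * q‖ ≤ ‖(1:ℂ)‖ + ‖a * q‖ := norm_sub_le _ _
        _ ≤ 1 + R := by rw [norm_one]; gcongr
    have hn2 : ‖1 - a * q * q‖ ≤ 1 + R := by
      calc ‖1 - a * q * q‖ ≤ ‖(1:ℂ)‖ + ‖a * q * q‖ := norm_sub_le _ _
        _ ≤ 1 + R := by rw [norm_one]; gcongr
    have step : ‖Er q a‖ ≤ (1 + ‖a * q‖) * Bi + ‖a * q‖ * (1 + R) * (1 + R) * Bi := by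
      rw [FE_E hq a]
      calc ‖(1 - a * q) * Er q (a * q) +
            a * q * (1 - a * q) * (1 - a * q * q) * Er q (a * q * q)‖
          ≤ ‖(1 - a * q) * Er q (a * q)‖ +
            ‖a * q * (1 - a * q) * (1 - a * q * q) * Er q (a * q * q)‖ := norm_add_le _ _
        _ ≤ (1 + ‖a * q‖) * Bi + ‖a * q‖ * (1 + R) * (1 + R) * Bi := by
            apply add_le_add
            · rw [norm_mul]
              apply mul_le_mul _ h1 (norm_nonneg _) (by positivity)
              calc ‖1 - a * q‖ ≤ ‖(1:ℂ)‖ + ‖a * q‖ := norm_sub_le _ _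
                _ = 1 + ‖a * q‖ := by rw [norm_one]
            · rw [norm_mul, norm_mul, norm_mul]
              apply mul_le_mul _ h2 (norm_nonneg _) (by positivity)
              apply mul_le_mul _ hn2 (norm_nonneg _) (by positivity)
              exact mul_le_mul le_rfl hn1 (norm_nonneg _) (norm_nonneg _)
    have hfac : (1 + ‖a * q‖) + ‖a * q‖ * (1 + R) * (1 + R) ≤ 1 + c * ‖q‖ ^ (N - i) := by
      have h3 : ‖a * q‖ * (1 + (1 + R) ^ 2) ≤ (R * ‖q‖ ^ (N - i)) * (1 + (1 + R) ^ 2) := by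
        apply mul_le_mul_of_nonneg_right haq (by positivity)
      rw [hc]
      nlinarith [norm_nonneg (a * q)]
    have hfac2 : 1 + c * ‖q‖ ^ (N - i) ≤ Real.exp (c * ‖q‖ ^ (N - i)) := by
      linarith [Real.add_one_le_exp (c * ‖q‖ ^ (N - i))]
    calc ‖Er q a‖ ≤ (1 + ‖a * q‖) * Bi + ‖a * q‖ * (1 + R) * (1 + R) * Bi := step
      _ = ((1 + ‖a * q‖) + ‖a * q‖ * (1 + R) * (1 + R)) * Bi := by ring
      _ ≤ Real.exp (c * ‖q‖ ^ (N - i)) * Bi := by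
          apply mul_le_mul_of_nonneg_right _ hBi0
          exact hfac.trans hfac2
      _ = KE q * R * ‖q‖ ^ N * Real.exp (c * ∑ k ∈ Finset.range (i + 1), ‖q‖ ^ (N - k)) := by
          rw [Finset.sum_range_succ, ← hS, hBi, mul_add, Real.exp_add]
          ring

lemma E_zero (hq : ‖q‖ < 1) (a : ℂ) : Er q a = 0 := by
  have hq0 := norm_nonneg q
  have hd := hd' hq
  have hKE := KE_nonneg hq
  set R := max ‖a‖ 1 with hRdef
  have hR : 1 ≤ R := le_max_right _ _
  have hR0 : (0:ℝ) < R := lt_of_lt_of_le one_pos hR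
  have haR : ‖a‖ ≤ R := le_max_left _ _
  set c := R * (1 + (1 + R) ^ 2) with hc
  have hc0 : 0 ≤ c := by positivity
  set Cst := KE q * R * Real.exp (c * (1 / (1 - ‖q‖))) with hCst
  have hCst0 : 0 ≤ Cst := by positivity
  have hbound : ∀ N : ℕ, R * ‖q‖ ^ N ≤ 1 → ‖Er q a‖ ≤ Cst * ‖q‖ ^ N := by
    intro N hRN
    have h0 := main_ind hq R hR N hRN N le_rfl a (by
      rw [Nat.sub_self, pow_zero, mul_one]; exact haR)
    have hsumb : ∑ k ∈ Finset.range N, ‖q‖ ^ (N - k) ≤ 1 / (1 - ‖q‖) := by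
      have hrefl : ∑ k ∈ Finset.range N, ‖q‖ ^ (N - k) =
          ∑ k ∈ Finset.range N, ‖q‖ ^ (k + 1) := by
        rw [← Finset.sum_range_reflect]
        apply Finset.sum_congr rfl
        intro j hj
        congr 1
        have := Finset.mem_range.mp hj
        omega
      rw [hrefl]
      have hterm : ∀ k ∈ Finset.range N, ‖q‖ ^ (k + 1) ≤ ‖q‖ ^ k := by
        intro k _
        exact pow_le_pow_of_le_one hq0 hq.le (Nat.le_succ k)
      calc ∑ k ∈ Finset.range N, ‖q‖ ^ (k + 1) ≤ ∑ k ∈ Finset.range N, ‖q‖ ^ k :=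
            Finset.sum_le_sum hterm
        _ ≤ ∑' k : ℕ, ‖q‖ ^ k := Summable.sum_le_tsum _ (fun k _ => by positivity)
            (summable_geometric_of_lt_one hq0 hq)
        _ = (1 - ‖q‖)⁻¹ := tsum_geometric_of_lt_one hq0 hq
        _ = 1 / (1 - ‖q‖) := (one_div _).symm
    calc ‖Er q a‖ ≤ KE q * R * ‖q‖ ^ N *
          Real.exp (c * ∑ k ∈ Finset.range N, ‖q‖ ^ (N - k)) := h0
      _ ≤ KE q * R * ‖q‖ ^ N * Real.exp (c * (1 / (1 - ‖q‖))) := by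
          gcongr
      _ = Cst * ‖q‖ ^ N := by rw [hCst]; ring
  have htend : Tendsto (fun N : ℕ => Cst * ‖q‖ ^ N) atTop (𝓝 0) := by
    simpa using (tendsto_pow_atTop_nhds_zero_of_lt_one hq0 hq).const_mul Cst
  have hev : ∀ᶠ N : ℕ in atTop, ‖Er q a‖ ≤ Cst * ‖q‖ ^ N := by
    have htend2 : Tendsto (fun N : ℕ => R * ‖q‖ ^ N) atTop (𝓝 0) := by
      simpa using (tendsto_pow_atTop_nhds_zero_of_lt_one hq0 hq).const_mul R
    filter_upwards [htend2.eventually (eventually_le_nhds one_pos)] with N hN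
    exact hbound N hN
  have hle : ‖Er q a‖ ≤ 0 := ge_of_tendsto htend hev
  have := norm_nonneg (Er q a)
  rw [← norm_le_zero_iff]
  linarith

end Efun

section Final

variable {q : ℂ}

lemma stmt_term_eq (hq : ‖q‖ < 1) {a : ℂ} (ha : a ≠ 1) (r : ℕ) :
    (1 - a * q ^ (2 * r)) / (1 - a) * (qPoch a q r / qPoch q q r) *
      (-1 : ℂ) ^ r * a ^ (2 * r) * q ^ (5 * (r * (r - 1) / 2) + 2 * r) = phiR q a r := by
  have h1a : (1 : ℂ) - a ≠ 0 := sub_ne_zero.mpr (Ne.symm ha)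
  have hEn : 5 * (r * (r - 1) / 2) + 2 * r = En r := rfl
  rw [hEn]
  cases r with
  | zero =>
    rw [phiR_zero]
    simp only [mul_zero, pow_zero, mul_one, qPoch_zero]
    rw [div_self h1a]
    norm_num [En]
  | succ m =>
    have hD := qPochq_ne_zero hq (m + 1)
    rw [phiR, qPoch_succ']
    show (1 - a * q ^ (2 * (m + 1))) / (1 - a) *
        ((1 - a) * qPoch (a * q) q m / qPoch q q (m + 1)) * (-1) ^ (m + 1) * a ^ (2 * (m + 1)) *
        q ^ En (m + 1) =
      (-1) ^ (m + 1) * a ^ (2 * (m + 1)) * q ^ En (m + 1) *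
        ((1 - a * q ^ (2 * (m + 1))) * qPoch (a * q) q m) / qPoch q q (m + 1)
    field_simp

theorem rogers_selberg_main (q a : ℂ) (hq : ‖q‖ < 1) (ha : a ≠ 1)
    (ha' : ∀ k : ℕ, a * q ^ (k + 1) ≠ 1) :
    ∑' r : ℕ, a ^ r * q ^ (r ^ 2) / qPoch q q r
      = 1 / qPochInf (a * q) q *
          ∑' r : ℕ, (1 - a * q ^ (2 * r)) / (1 - a) * (qPoch a q r / qPoch q q r) *
            (-1 : ℂ) ^ r * a ^ (2 * r) * q ^ (5 * (r * (r - 1) / 2) + 2 * r) := by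
  have hE := E_zero hq a
  have hPne : qPochInf (a * q) q ≠ 0 := by
    apply Q_ne_zero hq (a * q)
    intro j
    intro hcon
    apply ha' j
    have : a * q * q ^ j = a * q ^ (j + 1) := by rw [pow_succ]; ring
    rw [← this]
    linear_combination -hcon
  have hL : ∑' r : ℕ, a ^ r * q ^ (r ^ 2) / qPoch q q r = Fs q a := rfl
  have hRtsum : (∑' r : ℕ, (1 - a * q ^ (2 * r)) / (1 - a) * (qPoch a q r / qPoch q q r) *
      (-1 : ℂ) ^ r * a ^ (2 * r) * q ^ (5 * (r * (r - 1) / 2) + 2 * r)) = Phi q a :=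
    tsum_congr fun r => stmt_term_eq hq ha r
  rw [hL, hRtsum]
  rw [Er] at hE
  have hPhi : Phi q a = qPochInf (a * q) q * Fs q a := by linear_combination -hE
  rw [hPhi, one_div, inv_mul_cancel_left₀ hPne]

end Final

end RS

/-- The Rogers–Selberg identity. -/
theorem rogers_selberg (q a : ℂ) (hq : ‖q‖ < 1) (ha : a ≠ 1)
    (ha' : ∀ k : ℕ, a * q ^ (k + 1) ≠ 1) :
    ∑' r : ℕ, a ^ r * q ^ (r ^ 2) / qPoch q q r
      = 1 / qPochInf (a * q) q *
          ∑' r : ℕ, (1 - a * q ^ (2 * r)) / (1 - a) * (qPoch a q r / qPoch q q r) *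
            (-1 : ℂ) ^ r * a ^ (2 * r) * q ^ (5 * (r * (r - 1) / 2) + 2 * r) := by
  have hqn : ‖q‖ < 1 := hq
  exact RS.rogers_selberg_main q a hqn ha ha'
end

section
/- The C_n Weyl denominator formula holds: det_{1≤i,j≤n}(x_i^{j-1} - x_i^{2n-j+1}) = ∏_{i=1}^n (1 - x_i²) · ∏_{1≤i<j≤n} (x_i - x_j)(x_i x_j - 1). -/
open Polynomial Finset Matrix Equiv


noncomputable def chebS (K : Type*) [CommRing K] : ℕ → K[X]
  | 0 => 1
  | 1 => X
  | (m+2) => X * chebS K (m+1) - chebS K m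

theorem chebS_deg_monic (K : Type*) [CommRing K] [Nontrivial K] :
    ∀ m : ℕ, (chebS K m).degree = m ∧ (chebS K m).Monic := by
  have key : ∀ m : ℕ, ((chebS K m).degree = m ∧ (chebS K m).Monic) ∧
      ((chebS K (m+1)).degree = m+1 ∧ (chebS K (m+1)).Monic) := by
    intro m
    induction m with
    | zero =>
      refine ⟨⟨?_, ?_⟩, ⟨?_, ?_⟩⟩ <;> simp [chebS, monic_one, monic_X, degree_one, degree_X]
    | succ m ih =>
      obtain ⟨⟨d1, m1⟩, ⟨d2, m2⟩⟩ := ih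
      have hXmul : (X * chebS K (m+1)).degree = ((m + 2 : ℕ) : WithBot ℕ) := by
        rw [m2.degree_mul, degree_X, d2]
        push_cast
        ring
      have hlt : (chebS K m).degree < (X * chebS K (m+1)).degree := by
        rw [hXmul, d1]
        exact_mod_cast Nat.lt_succ_of_lt (Nat.lt_succ_self m)
      have hmon : (X * chebS K (m+1)).Monic := monic_X.mul m2
      have hrfl : chebS K (m+1+1) = X * chebS K (m+1) - chebS K m := rfl
      refine ⟨⟨d2, m2⟩, ?_, ?_⟩
      · rw [hrfl, degree_sub_eq_left_of_degree_lt hlt, hXmul]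
        push_cast; ring
      · rw [hrfl]
        exact hmon.sub_of_left hlt
  exact fun m => (key m).1

theorem chebS_eval {K : Type*} [CommRing K] {x u : K} (h : x * u = 1) :
    ∀ m : ℕ, x ^ (m+1) - u ^ (m+1) = (x - u) * (chebS K m).eval (x + u) := by
  have key : ∀ m : ℕ, (x ^ (m+1) - u ^ (m+1) = (x - u) * (chebS K m).eval (x + u)) ∧
      (x ^ (m+2) - u ^ (m+2) = (x - u) * (chebS K (m+1)).eval (x + u)) := by
    intro m
    induction m with
    | zero => constructor <;> simp [chebS] <;> ring
    | succ m ih =>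
      obtain ⟨h1, h2⟩ := ih
      refine ⟨h2, ?_⟩
      have hrfl : chebS K (m+1+1) = X * chebS K (m+1) - chebS K m := rfl
      rw [hrfl, eval_sub, eval_mul, eval_X]
      linear_combination (x + u) * h2 - h1 - (x ^ (m+1) - u ^ (m+1)) * h
  exact fun m => (key m).1



theorem revPerm_succ (n : ℕ) :
    (Fin.revPerm : Equiv.Perm (Fin (n+1))) =
      Equiv.Perm.decomposeFin.symm (Fin.last n, Fin.revPerm * finRotate n) := by
  ext i
  refine Fin.cases ?_ (fun x => ?_) i
  · simp
  · rw [Equiv.Perm.decomposeFin_symm_apply_succ]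
    simp only [Equiv.Perm.coe_mul, Function.comp_apply, Fin.revPerm_apply]
    rcases n with _ | k
    · exact absurd x.2 (by omega)
    rcases eq_or_ne x (Fin.last k) with h | h
    · subst h
      simp [finRotate_succ_apply, Equiv.swap_apply_of_ne_of_ne]
    · have hx : (x : ℕ) < k + 1 := x.2
      have hx' : (x : ℕ) ≠ k := fun hc => h (Fin.ext hc)
      have hr : ((finRotate (k+1) x : Fin (k+1)) : ℕ) = (x : ℕ) + 1 := by
        rw [finRotate_succ_apply, Fin.val_add_one_of_lt]
        rw [Fin.lt_iff_val_lt_val, Fin.val_last]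
        omega
      have hrev : (((finRotate (k+1) x).rev : Fin (k+1)) : ℕ) = k - ((x:ℕ) + 1) := by
        rw [Fin.val_rev, hr]; omega
      rw [Equiv.swap_apply_of_ne_of_ne]
      · rw [Fin.val_rev, Fin.val_succ, Fin.val_succ, hrev]
        omega
      · rw [Fin.ne_iff_vne, Fin.val_succ, hrev, Fin.val_zero]
        omega
      · rw [Fin.ne_iff_vne, Fin.val_succ, hrev, Fin.val_last]
        omega

theorem sign_revPerm : ∀ n : ℕ, Equiv.Perm.sign (Fin.revPerm : Equiv.Perm (Fin n))
    = (-1) ^ (n * (n-1) / 2) := by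
  intro n
  rw [← Nat.choose_two_right]
  induction n with
  | zero => simp [Subsingleton.elim (Fin.revPerm : Equiv.Perm (Fin 0)) 1]
  | succ n ih =>
    rw [revPerm_succ, Equiv.Perm.decomposeFin.symm_sign, _root_.map_mul, ih]
    rcases n with _ | k
    · norm_num
    · rw [if_neg (by simp [Fin.ext_iff]), sign_finRotate]
      have h2 : (k+1+1).choose 2 = (k+1).choose 1 + (k+1).choose 2 :=
        Nat.choose_succ_succ (k+1) 1
      have : (k+1+1).choose 2 = 1 + ((k+1).choose 2 + k) := by
        rw [h2, Nat.choose_one_right]; omega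
      rw [this, pow_add, pow_add, pow_one]
      simp only [Nat.add_sub_cancel]



theorem prod_pairs_mul {K : Type*} [CommMonoid K] {n : ℕ} (g : Fin n → K) :
    (∏ i : Fin n, ∏ j ∈ Ioi i, (g i * g j)) = ∏ i : Fin n, g i ^ (n - 1) := by
  simp_rw [Finset.prod_mul_distrib]
  have h2 : (∏ i : Fin n, ∏ j ∈ Ioi i, g j) = ∏ j : Fin n, ∏ _i ∈ Iio j, g j :=
    prod_comm' (by simp)
  rw [h2]
  simp_rw [Finset.prod_const, Fin.card_Ioi, Fin.card_Iio]
  rw [← Finset.prod_mul_distrib]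
  refine Finset.prod_congr rfl fun i _ => ?_
  rw [← pow_add]
  congr 1
  omega

theorem sum_card_Ioi (n : ℕ) : ∑ i : Fin n, (Ioi i).card = n * (n-1) / 2 := by
  simp_rw [Fin.card_Ioi]
  rw [Fin.sum_univ_eq_sum_range (fun i => n - 1 - i) n, Finset.sum_range_reflect (fun i => i) n,
    Finset.sum_range_id n]

theorem weyl_C_field {K : Type*} [Field K] (n : ℕ) (x : Fin n → K) (hx : ∀ i, x i ≠ 0) :
    Matrix.det (Matrix.of fun i j : Fin n => x i ^ (j : ℕ) - x i ^ (2 * n - (j : ℕ)))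
      = (∏ i : Fin n, (1 - x i ^ 2)) *
          ∏ i : Fin n, ∏ j ∈ Ioi i, ((x i - x j) * (x i * x j - 1)) := by
  set u : Fin n → K := fun i => (x i)⁻¹ with hu
  have hxu : ∀ i, x i * u i = 1 := fun i => mul_inv_cancel₀ (hx i)
  set y : Fin n → K := fun i => x i + u i with hy
  -- entrywise identity
  have entry : ∀ i j : Fin n, x i ^ (j : ℕ) - x i ^ (2 * n - (j : ℕ))
      = (x i ^ (n-1) * (1 - x i ^ 2)) * (chebS K (n-1-(j:ℕ))).eval (y i) := by
    intro i j
    have hj : (j : ℕ) < n := j.2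
    have e1 : x i ^ (2*n - (j:ℕ)) = x i ^ n * x i ^ (n - (j:ℕ)) := by
      rw [← pow_add]; congr 1; omega
    have e2 : x i ^ (j:ℕ) = x i ^ n * u i ^ (n - (j:ℕ)) := by
      have h' : x i ^ n = x i ^ (j:ℕ) * x i ^ (n - (j:ℕ)) := by
        rw [← pow_add]; congr 1; omega
      rw [h', mul_assoc, ← mul_pow, hxu, one_pow, mul_one]
    have e3 : x i ^ (n-(j:ℕ)) - u i ^ (n-(j:ℕ))
        = (x i - u i) * (chebS K (n-1-(j:ℕ))).eval (y i) := by
      have h3 := chebS_eval (hxu i) (n-1-(j:ℕ))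
      rwa [show n-1-(j:ℕ)+1 = n-(j:ℕ) by omega] at h3
    have e4 : -(x i ^ n * (x i - u i)) = x i ^ (n-1) * (1 - x i ^ 2) := by
      have hp : x i ^ n = x i ^ (n-1) * x i := by rw [← pow_succ]; congr 1; omega
      rw [hp]; linear_combination (x i ^ (n-1)) * hxu i
    linear_combination e2 - e1 - (x i ^ n) * e3 + ((chebS K (n-1-(j:ℕ))).eval (y i)) * e4
  -- matrix factorization
  have hA : ∀ m : ℕ, (chebS K m).natDegree = m := fun m =>
    natDegree_eq_of_degree_eq_some (chebS_deg_monic K m).1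
  have step1 : (Matrix.of fun i j : Fin n => x i ^ (j : ℕ) - x i ^ (2 * n - (j : ℕ)))
      = Matrix.of (fun i j : Fin n => (x i ^ (n-1) * (1 - x i ^ 2)) *
          ((Matrix.of fun i j : Fin n => (chebS K ((j:ℕ))).eval (y i)).submatrix
            id Fin.revPerm) i j) := by
    ext i j
    rw [Matrix.of_apply, entry i j]
    simp only [Matrix.submatrix_apply, id_eq, Fin.revPerm_apply, Matrix.of_apply]
    have hj : (j:ℕ) < n := j.2
    have : (Fin.rev j : ℕ) = n - 1 - (j:ℕ) := by rw [Fin.val_rev]; omega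
    rw [this]
  rw [step1, Matrix.det_mul_column, Matrix.det_permute',
    ← Matrix.det_eval_matrixOfPolynomials_eq_det_vandermonde y (fun j => chebS K (j:ℕ))
      (fun j => hA (j:ℕ)) (fun j => (chebS_deg_monic K (j:ℕ)).2),
    Matrix.det_vandermonde, sign_revPerm]
  -- now scalar bookkeeping
  have f1 : ∀ i j : Fin n, y j - y i
      = (-1) * (((x i - x j) * (x i * x j - 1)) * (u i * u j)) := by
    intro i j
    have h1 := hxu i; have h2 := hxu j
    simp only [hy]
    linear_combination ((x i - x j) * (x j * u j) - u j) * h1 + ((x i - x j) + u i) * h2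
  simp_rw [f1]
  rw [show (∏ i : Fin n, ∏ j ∈ Ioi i,
        ((-1) * (((x i - x j) * (x i * x j - 1)) * (u i * u j))))
      = (∏ i : Fin n, ∏ j ∈ Ioi i, (-1:K)) *
        ((∏ i : Fin n, ∏ j ∈ Ioi i, ((x i - x j) * (x i * x j - 1))) *
         (∏ i : Fin n, ∏ j ∈ Ioi i, (u i * u j))) by
    simp_rw [← Finset.prod_mul_distrib]]
  have hsgn : (∏ i : Fin n, ∏ j ∈ Ioi i, (-1:K)) = (-1) ^ (n * (n-1) / 2) := by
    simp_rw [Finset.prod_const]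
    rw [Finset.prod_pow_eq_pow_sum, sum_card_Ioi]
  rw [hsgn, prod_pairs_mul u]
  have hpm : (∏ i : Fin n, (x i ^ (n-1) * (1 - x i ^ 2)))
      = (∏ i : Fin n, x i ^ (n-1)) * ∏ i : Fin n, (1 - x i ^ 2) :=
    Finset.prod_mul_distrib
  have hxun : (∏ i : Fin n, x i ^ (n-1)) * (∏ i : Fin n, u i ^ (n-1)) = 1 := by
    rw [← Finset.prod_mul_distrib]
    simp_rw [← mul_pow, hxu, one_pow, Finset.prod_const_one]
  have hs2 : ((-1:K) ^ (n * (n-1) / 2)) * ((-1:K) ^ (n * (n-1) / 2)) = 1 := by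
    rw [← pow_add, ← two_mul, pow_mul]; norm_num
  rw [hpm]
  push_cast
  linear_combination
    ((∏ i : Fin n, (1 - x i ^ 2)) * (∏ i : Fin n, ∏ j ∈ Ioi i, ((x i - x j) * (x i * x j - 1)))
      * (∏ i : Fin n, x i ^ (n-1)) * (∏ i : Fin n, u i ^ (n-1))) * hs2 +
    ((∏ i : Fin n, (1 - x i ^ 2)) *
      (∏ i : Fin n, ∏ j ∈ Ioi i, ((x i - x j) * (x i * x j - 1)))) * hxun

section transfer
variable {A B : Type*} [CommRing A] [CommRing B] (f : A →+* B) (n : ℕ) (z : Fin n → A)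

theorem mapL : f (Matrix.det (Matrix.of fun i j : Fin n =>
      z i ^ (j : ℕ) - z i ^ (2 * n - (j : ℕ))))
    = Matrix.det (Matrix.of fun i j : Fin n =>
      f (z i) ^ (j : ℕ) - f (z i) ^ (2 * n - (j : ℕ))) := by
  rw [RingHom.map_det]
  congr 1
  ext i j
  simp [RingHom.mapMatrix_apply]

theorem mapR : f ((∏ i : Fin n, (1 - z i ^ 2)) *
      ∏ i : Fin n, ∏ j ∈ Ioi i, ((z i - z j) * (z i * z j - 1)))
    = (∏ i : Fin n, (1 - f (z i) ^ 2)) *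
      ∏ i : Fin n, ∏ j ∈ Ioi i, ((f (z i) - f (z j)) * (f (z i) * f (z j) - 1)) := by
  simp [map_prod, map_sub, _root_.map_mul, map_pow]

end transfer

/-- The `C_n` Weyl denominator formula.  Rows and columns of the matrix are indexed by
`Fin n`, with the `(i,j)`-entry (for 1-based indices) `x_i^{j-1} - x_i^{2n-j+1}`. -/
theorem weyl_denominator_C (R : Type*) [CommRing R] (n : ℕ) (x : Fin n → R) :
    Matrix.det (Matrix.of fun i j : Fin n => x i ^ (j : ℕ) - x i ^ (2 * n - (j : ℕ)))
      = (∏ i : Fin n, (1 - x i ^ 2)) *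
          ∏ i : Fin n, ∏ j ∈ Finset.Ioi i, ((x i - x j) * (x i * x j - 1)) := by
  have hinj : Function.Injective (algebraMap (MvPolynomial (Fin n) ℤ)
      (FractionRing (MvPolynomial (Fin n) ℤ))) := IsFractionRing.injective _ _
  have hX : ∀ i : Fin n, algebraMap (MvPolynomial (Fin n) ℤ)
      (FractionRing (MvPolynomial (Fin n) ℤ)) (MvPolynomial.X i) ≠ 0 := fun i => by
    rw [← map_zero (algebraMap (MvPolynomial (Fin n) ℤ) (FractionRing (MvPolynomial (Fin n) ℤ)))]
    exact fun h => MvPolynomial.X_ne_zero i (hinj h)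
  have hfield := weyl_C_field n (fun i => algebraMap (MvPolynomial (Fin n) ℤ)
      (FractionRing (MvPolynomial (Fin n) ℤ)) (MvPolynomial.X i)) hX
  rw [← mapL _ n MvPolynomial.X, ← mapR _ n MvPolynomial.X] at hfield
  have hP := hinj hfield
  have := congrArg ((MvPolynomial.aeval x : MvPolynomial (Fin n) ℤ →ₐ[ℤ] R) : _ →+* R) hP
  rw [mapL, mapR] at this
  simpa only [RingHom.coe_coe, MvPolynomial.aeval_X] using this
end

section
/- The B_n Weyl denominator formula holds: det_{1≤i,j≤n}(x_i^{j-1} - x_i^{2n-j}) = ∏_{i=1}^n (1 - x_i) · ∏_{1≤i<j≤n} (x_i - x_j)(x_i x_j - 1). -/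
open Polynomial Finset

noncomputable def SchB : ℕ → Polynomial ℤ
  | 0 => 1
  | 1 => X + 1
  | (r+2) => X * SchB (r+1) - SchB r

lemma SchB_monic_natDegree : ∀ r : ℕ, (SchB r).Monic ∧ (SchB r).natDegree = r := by
  have key : ∀ r : ℕ, ((SchB r).Monic ∧ (SchB r).natDegree = r) ∧
      ((SchB (r+1)).Monic ∧ (SchB (r+1)).natDegree = r+1) := by
    intro r
    induction r with
    | zero =>
      refine ⟨⟨monic_one, natDegree_one⟩, ?_, ?_⟩
      · show (X + 1 : ℤ[X]).Monic
        simpa using monic_X_add_C (1 : ℤ)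
      · show (X + 1 : ℤ[X]).natDegree = 1
        simpa using natDegree_X_add_C (1 : ℤ)
    | succ r ih =>
      obtain ⟨⟨hm0, hd0⟩, hm1, hd1⟩ := ih
      have hdeg : (X * SchB (r+1)).natDegree = r + 2 := by
        rw [natDegree_mul X_ne_zero hm1.ne_zero, natDegree_X, hd1]; omega
      refine ⟨⟨hm1, hd1⟩, ?_, ?_⟩
      · show (X * SchB (r+1) - SchB r).Monic
        refine Monic.sub_of_left (monic_X.mul hm1) ?_
        rw [degree_eq_natDegree hm0.ne_zero, degree_eq_natDegree (monic_X.mul hm1).ne_zero, hdeg,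
          hd0]
        norm_cast
        omega
      · show (X * SchB (r+1) - SchB r).natDegree = r + 2
        rw [natDegree_sub_eq_left_of_natDegree_lt, hdeg]
        rw [hdeg, hd0]; omega
  exact fun r => (key r).1

lemma SchB_eval {F : Type*} [Field F] (x : F) (hx : x ≠ 0) :
    ∀ r : ℕ, x ^ r * (SchB r).eval₂ (Int.castRingHom F) (x + x⁻¹) = ∑ k ∈ range (2*r+1), x ^ k := by
  have hinv : x * x⁻¹ = 1 := mul_inv_cancel₀ hx
  have key : ∀ r : ℕ,
      (x ^ r * (SchB r).eval₂ (Int.castRingHom F) (x + x⁻¹) = ∑ k ∈ range (2*r+1), x ^ k) ∧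
      (x ^ (r+1) * (SchB (r+1)).eval₂ (Int.castRingHom F) (x + x⁻¹)
        = ∑ k ∈ range (2*(r+1)+1), x ^ k) := by
    intro r
    induction r with
    | zero =>
      constructor
      · simp [SchB]
      · show x ^ 1 * (X + 1 : ℤ[X]).eval₂ _ _ = _
        simp only [eval₂_add, eval₂_X, eval₂_one]
        rw [Finset.sum_range_succ, Finset.sum_range_succ, Finset.sum_range_one]
        rw [show x ^ 1 * (x + x⁻¹ + 1) = (x^2 + x + x * x⁻¹) by ring, hinv]
        ring
    | succ r ih =>
      obtain ⟨ih0, ih1⟩ := ih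
      refine ⟨ih1, ?_⟩
      show x ^ (r+2) * (X * SchB (r+1) - SchB r).eval₂ _ _ = _
      rw [eval₂_sub, eval₂_mul, eval₂_X]
      have expand : x ^ (r + 2) * ((x + x⁻¹) * (SchB (r+1)).eval₂ (Int.castRingHom F) (x + x⁻¹)
            - (SchB r).eval₂ (Int.castRingHom F) (x + x⁻¹))
          = (x^2 + x * x⁻¹) * (x ^ (r+1) * (SchB (r+1)).eval₂ (Int.castRingHom F) (x + x⁻¹))
            - x^2 * (x ^ r * (SchB r).eval₂ (Int.castRingHom F) (x + x⁻¹)) := by ring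
      rw [expand, hinv, ih0, ih1]
      rw [show 2*(r+1)+1 = (2*r+1)+2 by ring, show 2*(r+2)+1 = (2*r+1)+4 by ring]
      generalize 2*r+1 = m
      rw [show m+2 = m+1+1 from rfl, show m+4 = m+1+1+1+1 from rfl, Finset.sum_range_succ,
        Finset.sum_range_succ, Finset.sum_range_succ, Finset.sum_range_succ,
        Finset.sum_range_succ, Finset.sum_range_succ]
      ring
  exact fun r => (key r).1

section helpers
variable {M : Type*} [CommMonoid M] {n : ℕ}

lemma prod_Ioi_comm' (f : Fin n → Fin n → M) :
    ∏ i, ∏ j ∈ Ioi i, f i j = ∏ j, ∏ i ∈ Iio j, f i j := by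
  rw [Finset.prod_sigma', Finset.prod_sigma']
  refine Finset.prod_nbij' (fun p => ⟨p.2, p.1⟩) (fun p => ⟨p.2, p.1⟩) ?_ ?_ ?_ ?_ ?_ <;> simp

lemma prod_Ioi_rev (f : Fin n → Fin n → M) :
    ∏ i, ∏ j ∈ Ioi i, f (Fin.rev i) (Fin.rev j) = ∏ i, ∏ j ∈ Ioi i, f j i := by
  rw [← Equiv.prod_comp Fin.revPerm (fun i => ∏ j ∈ Ioi i, f (Fin.rev i) (Fin.rev j))]
  simp only [Fin.revPerm_apply, Fin.rev_rev]
  have inner : ∀ i : Fin n, ∏ j ∈ Ioi (Fin.rev i), f i (Fin.rev j) = ∏ k ∈ Iio i, f i k := by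
    intro i
    refine Finset.prod_nbij' Fin.rev Fin.rev ?_ ?_ ?_ ?_ ?_ <;>
      first
        | (intro a ha
           simp only [Finset.mem_Iio, Finset.mem_Ioi, Fin.lt_iff_val_lt_val, Fin.val_rev] at *
           omega)
        | simp
  simp only [inner]
  rw [prod_Ioi_comm' (fun a b => f b a)]
end helpers

lemma entryB {F : Type*} [Field F] (x : F) (hx : x ≠ 0) {n j : ℕ} (hj : j < n) :
    x ^ j - x ^ (2*n - j - 1)
      = ((1 - x) * x ^ (n-1)) * (SchB (n-1-j)).eval₂ (Int.castRingHom F) (x + x⁻¹) := by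
  have hg : (1 - x) * ∑ k ∈ range (2*(n-1-j)+1), x ^ k = 1 - x ^ (2*(n-1-j)+1) := by
    linear_combination (-1 : F) * geom_sum_mul x (2*(n-1-j)+1)
  have h1 : n - 1 = j + (n-1-j) := by omega
  have h2 : 2*n - j - 1 = j + (2*(n-1-j)+1) := by omega
  calc x ^ j - x ^ (2*n - j - 1)
      = x ^ j * (1 - x ^ (2*(n-1-j)+1)) := by rw [h2, pow_add]; ring
    _ = x ^ j * ((1 - x) * ∑ k ∈ range (2*(n-1-j)+1), x ^ k) := by rw [hg]
    _ = (1 - x) * (x ^ j * (x ^ (n-1-j) * (SchB (n-1-j)).eval₂ (Int.castRingHom F) (x + x⁻¹))) := by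
        rw [SchB_eval x hx]; ring
    _ = ((1 - x) * x ^ (n-1)) * (SchB (n-1-j)).eval₂ (Int.castRingHom F) (x + x⁻¹) := by
        have hp : x ^ (n-1) = x ^ j * x ^ (n-1-j) := by rw [← pow_add]; congr 1
        rw [hp]; ring

theorem weyl_denominator_B_field (F : Type*) [Field F] (n : ℕ) (x : Fin n → F)
    (hx : ∀ i, x i ≠ 0) :
    Matrix.det (Matrix.of fun i j : Fin n => x i ^ (j : ℕ) - x i ^ (2 * n - (j : ℕ) - 1))
      = (∏ i : Fin n, (1 - x i)) *
          ∏ i : Fin n, ∏ j ∈ Finset.Ioi i, ((x i - x j) * (x i * x j - 1)) := by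
  set y : Fin n → F := fun i => x i + (x i)⁻¹ with hy
  have hM : (Matrix.of fun i j : Fin n => x i ^ (j : ℕ) - x i ^ (2 * n - (j : ℕ) - 1))
      = Matrix.of fun i j : Fin n => ((1 - x i) * x i ^ (n-1)) *
          (SchB (n-1-(j:ℕ))).eval₂ (Int.castRingHom F) (y i) := by
    ext i j
    exact entryB (x i) (hx i) j.isLt
  rw [hM, show (Matrix.of fun i j : Fin n => ((1 - x i) * x i ^ (n-1)) *
      (SchB (n-1-(j:ℕ))).eval₂ (Int.castRingHom F) (y i)).det
      = (∏ i, ((1 - x i) * x i ^ (n-1))) * Matrix.det (fun i j : Fin n =>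
        (SchB (n-1-(j:ℕ))).eval₂ (Int.castRingHom F) (y i)) from Matrix.det_mul_column _ _]
  -- now compute the det of the Chebyshev-like matrix
  have hrev : (Matrix.det fun i j : Fin n =>
        (SchB (n-1-(j:ℕ))).eval₂ (Int.castRingHom F) (y i))
      = (Matrix.of fun i j : Fin n =>
        (SchB (j:ℕ)).eval₂ (Int.castRingHom F) (y (Fin.rev i))).det := by
    rw [← Matrix.det_submatrix_equiv_self Fin.revPerm]
    congr 1
    ext i j
    simp only [Matrix.submatrix_apply, Matrix.of_apply, Fin.revPerm_apply]
    congr 2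
    · exact (Fin.rev_rev i).symm
    have := j.isLt
    simp only [Fin.val_rev]
    omega
  have hvdm : (Matrix.of fun i j : Fin n =>
        (SchB (j:ℕ)).eval₂ (Int.castRingHom F) (y (Fin.rev i))).det
      = ∏ i, ∏ j ∈ Ioi i, (y (Fin.rev j) - y (Fin.rev i)) := by
    simp only [Polynomial.eval₂_eq_eval_map]
    rw [← Matrix.det_eval_matrixOfPolynomials_eq_det_vandermonde (fun i => y (Fin.rev i))
        (fun j => (SchB (j:ℕ)).map (Int.castRingHom F))
        (fun i => by simpa [(SchB_monic_natDegree (i:ℕ)).1.natDegree_map]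
          using (SchB_monic_natDegree (i:ℕ)).2)
        (fun i => ((SchB_monic_natDegree (i:ℕ)).1).map _), Matrix.det_vandermonde]
  rw [hrev, hvdm, prod_Ioi_rev (fun a b => y b - y a)]
  have hxx : ∏ i, ∏ j ∈ Ioi i, (x i * x j) = ∏ i, x i ^ (n-1) := by
    simp only [Finset.prod_mul_distrib, Finset.prod_const]
    rw [prod_Ioi_comm' (fun i j => x j)]
    simp only [Finset.prod_const, ← Finset.prod_mul_distrib, Fin.card_Ioi, Fin.card_Iio,
      ← pow_add]
    exact Finset.prod_congr rfl fun i _ => by congr 1; have := i.isLt; omega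
  have hfac : ∀ i j : Fin n, (x i - x j) * (x i * x j - 1) = (x i * x j) * (y i - y j) := by
    intro i j
    have hi := mul_inv_cancel₀ (hx i)
    have hj := mul_inv_cancel₀ (hx j)
    simp only [hy]
    linear_combination x i * hj - x j * hi
  calc (∏ i, ((1 - x i) * x i ^ (n-1))) * ∏ i, ∏ j ∈ Ioi i, (y i - y j)
      = (∏ i, (1 - x i)) * ((∏ i, ∏ j ∈ Ioi i, (x i * x j)) *
          ∏ i, ∏ j ∈ Ioi i, (y i - y j)) := by
        rw [Finset.prod_mul_distrib, hxx]; ring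
    _ = (∏ i, (1 - x i)) * ∏ i, ∏ j ∈ Ioi i, ((x i - x j) * (x i * x j - 1)) := by
        simp only [← Finset.prod_mul_distrib, hfac]

open MvPolynomial

/-- The `B_n` Weyl denominator formula.  Rows and columns of the matrix are indexed by
`Fin n`, with the `(i,j)`-entry (for 1-based indices) `x_i^{j-1} - x_i^{2n-j}`. -/
theorem weyl_denominator_B (R : Type*) [CommRing R] (n : ℕ) (x : Fin n → R) :
    Matrix.det (Matrix.of fun i j : Fin n => x i ^ (j : ℕ) - x i ^ (2 * n - (j : ℕ) - 1))
      = (∏ i : Fin n, (1 - x i)) *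
          ∏ i : Fin n, ∏ j ∈ Finset.Ioi i, ((x i - x j) * (x i * x j - 1)) := by
  have generic :
      Matrix.det (Matrix.of fun i j : Fin n =>
          (X i : MvPolynomial (Fin n) ℤ) ^ (j : ℕ) - X i ^ (2 * n - (j : ℕ) - 1))
        = (∏ i : Fin n, (1 - X i)) *
            ∏ i : Fin n, ∏ j ∈ Finset.Ioi i, (((X i : MvPolynomial (Fin n) ℤ) - X j) *
              (X i * X j - 1)) := by
    set K := FractionRing (MvPolynomial (Fin n) ℤ)
    have inj := IsFractionRing.injective (MvPolynomial (Fin n) ℤ) K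
    apply inj
    set f : MvPolynomial (Fin n) ℤ →+* K := algebraMap _ K with hf
    have key := weyl_denominator_B_field K n (fun i => f (X i)) (fun i => by
      simp only [ne_eq, map_eq_zero_iff f inj]
      exact MvPolynomial.X_ne_zero i)
    rw [RingHom.map_det, map_mul, map_prod]
    simp only [map_prod, map_mul, map_sub, map_one, map_pow]
    rw [← key]
    congr 1
    ext i j
    simp [Matrix.map_apply]
  have := congrArg (MvPolynomial.eval₂Hom (Int.castRingHom R) x) generic
  rw [RingHom.map_det, map_mul, map_prod] at this
  simp only [map_prod, map_mul, map_sub, map_one, map_pow, MvPolynomial.eval₂Hom_X'] at this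
  rw [← this]
  congr 1
  ext i j
  simp [Matrix.map_apply]
end

section
/- The D_n Weyl denominator formula holds: (1/2) · det_{1≤i,j≤n}(x_i^{j-1} + x_i^{2n-j-1}) = ∏_{1≤i<j≤n} (x_i - x_j)(x_i x_j - 1). -/
open Polynomial Finset Matrix


lemma dicksonDegLe : ∀ k : ℕ, (dickson 1 (1:ℤ) k).natDegree ≤ k := by
  intro k
  induction k using Nat.strong_induction_on with
  | _ k ih =>
    match k with
    | 0 => norm_num [dickson_zero]
    | 1 => simpa using natDegree_X_le
    | (k+2) =>
      rw [dickson_add_two]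
      refine le_trans (natDegree_sub_le _ _) (max_le ?_ ?_)
      · exact le_trans (natDegree_mul_le) (by
          have := ih (k+1) (by omega)
          have hX := natDegree_X_le (R := ℤ)
          omega)
      · simp only [C_1, one_mul]
        exact le_trans (ih k (by omega)) (by omega)

lemma dicksonCoeffSelf : ∀ k : ℕ, (dickson 1 (1:ℤ) (k+1)).coeff (k+1) = 1 := by
  intro k
  induction k with
  | zero => simp
  | succ k ih =>
    rw [show k+1+1 = k+2 from rfl, dickson_add_two, coeff_sub, coeff_X_mul, ih,
      C_1, one_mul, coeff_eq_zero_of_natDegree_lt (lt_of_le_of_lt (dicksonDegLe k) (by omega)),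
      sub_zero]

lemma dicksonCoeffSelf' {k : ℕ} (hk : k ≠ 0) : (dickson 1 (1:ℤ) k).coeff k = 1 := by
  obtain ⟨s, rfl⟩ := Nat.exists_eq_succ_of_ne_zero hk
  exact dicksonCoeffSelf s

lemma dicksonZeroCoeff : (dickson 1 (1:ℤ) 0).coeff 0 = 2 := by
  rw [dickson_zero]
  norm_num


lemma keyZ (k : ℕ) :
    ∑ m ∈ range (k+1), Polynomial.C ((dickson 1 (1:ℤ) k).coeff m) * X^(k-m) * (X^2+1)^m
      = X^(2*k) + 1 := by
  have hinj := IsFractionRing.injective (Polynomial ℤ) (FractionRing (Polynomial ℤ))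
  apply hinj
  set F := FractionRing (Polynomial ℤ)
  set φ := algebraMap (Polynomial ℤ) F with hφ
  set t : F := φ X with ht
  have htne : t ≠ 0 := by
    simp only [ht]
    exact fun h => X_ne_zero (hinj (by simpa using h))
  have h1 : t * t⁻¹ = 1 := mul_inv_cancel₀ htne
  have h2 := dickson_one_one_eval_add_inv t t⁻¹ h1 k
  -- rewrite dickson over F as map of dickson over ℤ
  have h3 : dickson 1 (1:F) k = (dickson 1 (1:ℤ) k).map (Int.castRingHom F) := by
    rw [map_dickson]; norm_num
  have h4 : ((dickson 1 (1:ℤ) k).map (Int.castRingHom F)).natDegree < k + 1 :=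
    lt_of_le_of_lt (le_trans (natDegree_map_le) (dicksonDegLe k)) (by omega)
  rw [h3, eval_eq_sum_range' h4] at h2
  simp only [coeff_map] at h2
  -- multiply h2 by t^k
  have h5 := congrArg (fun z => t^k * z) h2
  have hL : t^k * (t^k + (t⁻¹)^k) = t^(2*k) + 1 := by
    rw [mul_add, ← pow_add, ← mul_pow, h1, one_pow, two_mul]
  have hR : t^k * (∑ m ∈ range (k+1), Int.castRingHom F ((dickson 1 (1:ℤ) k).coeff m) * (t + t⁻¹)^m)
      = ∑ m ∈ range (k+1), Int.castRingHom F ((dickson 1 (1:ℤ) k).coeff m) * t^(k-m) * (t^2+1)^m := by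
    rw [mul_sum]
    refine sum_congr rfl fun m hm => ?_
    have hmk : m ≤ k := by simpa using Nat.lt_succ_iff.mp (mem_range.mp hm)
    have : t^k = t^(k-m) * t^m := by rw [← pow_add, Nat.sub_add_cancel hmk]
    have h6 : t^m * (t + t⁻¹)^m = (t^2+1)^m := by
      rw [← mul_pow, mul_add, ← sq, h1]
    calc t^k * (Int.castRingHom F ((dickson 1 (1:ℤ) k).coeff m) * (t + t⁻¹)^m)
        = Int.castRingHom F ((dickson 1 (1:ℤ) k).coeff m) * (t^(k-m) * (t^m * (t + t⁻¹)^m)) := by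
          rw [this]; ring
      _ = _ := by rw [h6]; ring
  rw [hL, hR] at h5
  -- now transport
  have hC : ∀ c : ℤ, φ (Polynomial.C c) = Int.castRingHom F c := fun c => by
    rw [eq_intCast (Polynomial.C : ℤ →+* _) c, map_intCast]; simp [Int.castRingHom]
  calc φ (∑ m ∈ range (k+1), Polynomial.C ((dickson 1 (1:ℤ) k).coeff m) * X^(k-m) * (X^2+1)^m)
      = ∑ m ∈ range (k+1), Int.castRingHom F ((dickson 1 (1:ℤ) k).coeff m) * t^(k-m) * (t^2+1)^m := by
        rw [map_sum]
        refine sum_congr rfl fun m _ => ?_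
        simp only [_root_.map_mul, _root_.map_pow, _root_.map_add, _root_.map_one, hC, ← ht]
    _ = t^(2*k) + 1 := h5
    _ = φ (X^(2*k) + 1) := by simp only [_root_.map_add, _root_.map_pow, _root_.map_one, ← ht]


lemma prodPowCard {R : Type*} [CommRing R] {n : ℕ} (v : Fin n → R) :
    ∏ i, ∏ j ∈ Ioi i, (v i * v j) = ∏ i, v i ^ (n-1) := by
  have hswap : (∏ i : Fin n, ∏ j ∈ Ioi i, v j) = ∏ j : Fin n, ∏ i ∈ Iio j, v j := by
    refine prod_comm' fun x y => ?_
    simp [Finset.mem_Ioi, Finset.mem_Iio]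
  calc ∏ i : Fin n, ∏ j ∈ Ioi i, (v i * v j)
      = (∏ i : Fin n, ∏ j ∈ Ioi i, v i) * (∏ i : Fin n, ∏ j ∈ Ioi i, v j) := by
        rw [← prod_mul_distrib]; exact prod_congr rfl fun i _ => prod_mul_distrib
    _ = (∏ i : Fin n, v i ^ (Ioi i).card) * (∏ i : Fin n, v i ^ (Iio i).card) := by
        rw [hswap]; simp [prod_const]
    _ = ∏ i : Fin n, v i ^ ((Ioi i).card + (Iio i).card) := by
        rw [← prod_mul_distrib]; exact prod_congr rfl fun i _ => (pow_add _ _ _).symm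
    _ = ∏ i : Fin n, v i ^ (n-1) := by
        refine prod_congr rfl fun i _ => ?_
        rw [Fin.card_Ioi, Fin.card_Iio]
        congr 1
        omega

lemma detHomogVdmField {K : Type*} [Field K] (n : ℕ) (a b : Fin n → K) (hb : ∀ i, b i ≠ 0) :
    det (Matrix.of fun i m : Fin n => a i ^ (m:ℕ) * b i ^ (n - 1 - (m:ℕ))) =
      ∏ i : Fin n, ∏ j ∈ Ioi i, (a j * b i - a i * b j) := by
  rcases n with _ | N
  · simp [det_fin_zero]
  have hentry : (Matrix.of fun i m : Fin N.succ => a i ^ (m:ℕ) * b i ^ (N.succ - 1 - (m:ℕ)))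
      = Matrix.of fun i m : Fin N.succ => (b i ^ N) * (vandermonde (fun i => a i / b i) i m) := by
    ext i m
    have hm : (m:ℕ) ≤ N := Nat.lt_succ_iff.mp m.isLt
    simp only [Matrix.of_apply, vandermonde_apply]
    rw [div_pow, show N.succ - 1 - (m:ℕ) = N - (m:ℕ) from rfl,
      show b i ^ N = b i ^ (N - (m:ℕ)) * b i ^ (m:ℕ) by rw [← pow_add, Nat.sub_add_cancel hm]]
    have h1 : b i ^ (m:ℕ) * (b i)⁻¹ ^ (m:ℕ) = 1 := by
      rw [← mul_pow, mul_inv_cancel₀ (hb i), one_pow]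
    calc a i ^ (m:ℕ) * b i ^ (N-(m:ℕ))
        = b i ^ (N-(m:ℕ)) * a i ^ (m:ℕ) * (b i ^ (m:ℕ) * (b i ^ (m:ℕ))⁻¹) := by
          rw [mul_inv_cancel₀ (pow_ne_zero _ (hb i)), mul_one]; ring
      _ = b i ^ (N-(m:ℕ)) * b i ^ (m:ℕ) * (a i ^ (m:ℕ) / b i ^ (m:ℕ)) := by
          rw [div_eq_mul_inv]; ring
  rw [hentry, det_mul_column, det_vandermonde]
  have hcount : (∏ i : Fin N.succ, b i ^ N) = ∏ i : Fin N.succ, ∏ j ∈ Ioi i, (b i * b j) := by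
    simpa using (prodPowCard b).symm
  rw [hcount, ← prod_mul_distrib]
  refine prod_congr rfl fun i _ => ?_
  rw [← prod_mul_distrib]
  refine prod_congr rfl fun j _ => ?_
  field_simp [hb i, hb j]

lemma detHomogVdm {R : Type*} [CommRing R] (n : ℕ) (a b : Fin n → R) :
    det (Matrix.of fun i m : Fin n => a i ^ (m:ℕ) * b i ^ (n - 1 - (m:ℕ))) =
      ∏ i : Fin n, ∏ j ∈ Ioi i, (a j * b i - a i * b j) := by
  -- generic case
  set Rp := MvPolynomial (Fin n ⊕ Fin n) ℤ
  have hgen : det (Matrix.of fun i m : Fin n =>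
        (MvPolynomial.X (Sum.inl i) : Rp) ^ (m:ℕ) * MvPolynomial.X (Sum.inr i) ^ (n - 1 - (m:ℕ))) =
      ∏ i : Fin n, ∏ j ∈ Ioi i,
        ((MvPolynomial.X (Sum.inl j) : Rp) * MvPolynomial.X (Sum.inr i)
          - MvPolynomial.X (Sum.inl i) * MvPolynomial.X (Sum.inr j)) := by
    set F := FractionRing Rp
    have hinj := IsFractionRing.injective Rp F
    apply hinj
    set φ := algebraMap Rp F with hφ
    rw [RingHom.map_det, RingHom.mapMatrix_apply]
    have hmap : ((Matrix.of fun i m : Fin n =>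
        (MvPolynomial.X (Sum.inl i) : Rp) ^ (m:ℕ) * MvPolynomial.X (Sum.inr i) ^ (n - 1 - (m:ℕ))).map φ)
        = Matrix.of fun i m : Fin n =>
          (φ (MvPolynomial.X (Sum.inl i))) ^ (m:ℕ) * (φ (MvPolynomial.X (Sum.inr i))) ^ (n - 1 - (m:ℕ)) := by
      ext i m
      simp [Matrix.map_apply, _root_.map_mul, _root_.map_pow]
    rw [hmap, detHomogVdmField n _ _ (fun i => ?_)]
    · rw [map_prod]
      refine prod_congr rfl fun i _ => ?_
      rw [map_prod]
      refine prod_congr rfl fun j _ => ?_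
      simp [_root_.map_sub, _root_.map_mul]
    · simp only [ne_eq, hφ]
      intro h
      exact MvPolynomial.X_ne_zero (Sum.inr i) (hinj (by rw [map_zero]; exact h))
  -- specialize
  have := congrArg (MvPolynomial.eval₂Hom (Int.castRingHom R) (Sum.elim a b)) hgen
  rw [RingHom.map_det, RingHom.mapMatrix_apply] at this
  convert this using 2
  · ext i m
    simp [Matrix.map_apply, _root_.map_mul, _root_.map_pow]
  · rw [map_prod]
    refine (prod_congr rfl fun i _ => ?_).symm
    rw [map_prod]
    refine prod_congr rfl fun j _ => ?_
    simp [_root_.map_sub, _root_.map_mul]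



lemma keyR {R : Type*} [CommRing R] (y : R) (k : ℕ) :
    ∑ m ∈ range (k+1), ((dickson 1 (1:ℤ) k).coeff m : R) * y^(k-m) * (y^2+1)^m
      = y^(2*k) + 1 := by
  have := congrArg (aeval y) (keyZ k)
  simpa [map_sum, _root_.map_mul, _root_.map_pow, _root_.map_add, _root_.map_one,
    aeval_C, aeval_X, algebraMap_int_eq, eq_intCast] using this

/-- The `D_n` Weyl denominator formula, stated over a commutative ring in the form
`det = 2 ∏`.  Rows and columns of the matrix are indexed by `Fin n`, with the
`(i,j)`-entry (for 1-based indices) `x_i^{j-1} + x_i^{2n-j-1}`. -/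
theorem weyl_denominator_D (R : Type*) [CommRing R] (n : ℕ) (hn : 1 ≤ n) (x : Fin n → R) :
    Matrix.det (Matrix.of fun i j : Fin n => x i ^ (j : ℕ) + x i ^ (2 * n - (j : ℕ) - 2))
      = 2 * ∏ i : Fin n, ∏ j ∈ Finset.Ioi i, ((x i - x j) * (x i * x j - 1)) := by
  classical
  set Cm : Matrix (Fin n) (Fin n) R :=
    Matrix.of (fun m j : Fin n => (((dickson 1 (1:ℤ) (n-1-(j:ℕ))).coeff (n-1-(m:ℕ)) : ℤ) : R))
    with hCm
  set G : Matrix (Fin n) (Fin n) R :=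
    Matrix.of (fun i m : Fin n => x i ^ (m:ℕ) * (x i^2+1)^(n-1-(m:ℕ))) with hG
  have hM : (Matrix.of fun i j : Fin n => x i ^ (j:ℕ) + x i ^ (2*n-(j:ℕ)-2)) = G * Cm := by
    ext i j
    rw [Matrix.mul_apply]
    have hj : (j:ℕ) ≤ n - 1 := by have := j.isLt; omega
    set k := n - 1 - (j:ℕ) with hk
    have step0 : ∑ m : Fin n, G i m * Cm m j
        = ∑ m ∈ range n, x i ^ m * (x i^2+1)^(n-1-m)
            * (((dickson 1 (1:ℤ) k).coeff (n-1-m) : ℤ) : R) := by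
      simp only [hG, hCm, Matrix.of_apply]
      exact Fin.sum_univ_eq_sum_range
        (fun m => x i ^ m * (x i^2+1)^(n-1-m) * (((dickson 1 (1:ℤ) k).coeff (n-1-m) : ℤ) : R)) n
    have step1 : ∑ m ∈ range n, x i ^ m * (x i^2+1)^(n-1-m)
          * (((dickson 1 (1:ℤ) k).coeff (n-1-m) : ℤ) : R)
        = ∑ m ∈ range n,
            (((dickson 1 (1:ℤ) k).coeff m : ℤ) : R) * x i ^ (n-1-m) * (x i^2+1)^m := by
      rw [← Finset.sum_range_reflect
        (fun m => (((dickson 1 (1:ℤ) k).coeff m : ℤ) : R) * x i ^ (n-1-m) * (x i^2+1)^m) n]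
      refine sum_congr rfl fun m hm => ?_
      have hmn : m < n := mem_range.mp hm
      have h1 : n - 1 - (n-1-m) = m := by omega
      rw [h1]
      ring
    have step2 : ∑ m ∈ range n,
          (((dickson 1 (1:ℤ) k).coeff m : ℤ) : R) * x i ^ (n-1-m) * (x i^2+1)^m
        = ∑ m ∈ range (k+1),
            (((dickson 1 (1:ℤ) k).coeff m : ℤ) : R) * x i ^ (n-1-m) * (x i^2+1)^m := by
      refine (sum_subset (by rw [range_subset_range]; omega) fun m _ hm => ?_).symm
      have : (dickson 1 (1:ℤ) k).coeff m = 0 :=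
        coeff_eq_zero_of_natDegree_lt (lt_of_le_of_lt (dicksonDegLe k)
          (by simp only [mem_range, not_lt] at hm; omega))
      rw [this, Int.cast_zero, zero_mul, zero_mul]
    have step3 : ∑ m ∈ range (k+1),
          (((dickson 1 (1:ℤ) k).coeff m : ℤ) : R) * x i ^ (n-1-m) * (x i^2+1)^m
        = x i ^ (j:ℕ) * ∑ m ∈ range (k+1),
            (((dickson 1 (1:ℤ) k).coeff m : ℤ) : R) * x i ^ (k-m) * (x i^2+1)^m := by
      rw [mul_sum]
      refine sum_congr rfl fun m hm => ?_
      have hmk : m ≤ k := by have := mem_range.mp hm; omega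
      have h2 : n - 1 - m = (j:ℕ) + (k - m) := by omega
      rw [h2, pow_add]
      ring
    rw [step0, step1, step2, step3, keyR (x i) k, mul_add, mul_one, ← pow_add]
    have h3 : (j:ℕ) + 2*k = 2*n - (j:ℕ) - 2 := by omega
    rw [h3, Matrix.of_apply]
    exact add_comm _ _
  have hdG : G.det = ∏ i : Fin n, ∏ j ∈ Ioi i, ((x i - x j) * (x i * x j - 1)) := by
    rw [hG, detHomogVdm n x (fun i => x i^2+1)]
    exact prod_congr rfl fun i _ => prod_congr rfl fun j _ => by ring
  have hdC : Cm.det = 2 := by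
    have htri : Cm.BlockTriangular OrderDual.toDual := by
      intro m j h
      have hmj : m < j := h
      have hjn : (j:ℕ) ≤ n - 1 := by have := j.isLt; omega
      show (((dickson 1 (1:ℤ) (n-1-(j:ℕ))).coeff (n-1-(m:ℕ)) : ℤ) : R) = 0
      rw [coeff_eq_zero_of_natDegree_lt (lt_of_le_of_lt (dicksonDegLe _)
        (by have : (m:ℕ) < (j:ℕ) := hmj; omega)), Int.cast_zero]
    rw [det_of_lowerTriangular Cm htri]
    have hlast : (⟨n-1, by omega⟩ : Fin n) ∈ (univ : Finset (Fin n)) := mem_univ _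
    rw [Finset.prod_eq_single (⟨n-1, by omega⟩ : Fin n)
      (fun m _ hm => ?_) (fun h => absurd hlast h)]
    · show (((dickson 1 (1:ℤ) (n-1-(n-1))).coeff (n-1-(n-1)) : ℤ) : R) = 2
      rw [Nat.sub_self, dicksonZeroCoeff]
      norm_num
    · show (((dickson 1 (1:ℤ) (n-1-(m:ℕ))).coeff (n-1-(m:ℕ)) : ℤ) : R) = 1
      have hmm : (m:ℕ) ≠ n - 1 := fun hc => hm (Fin.ext hc)
      have : n - 1 - (m:ℕ) ≠ 0 := by have := m.isLt; omega
      rw [dicksonCoeffSelf' this, Int.cast_one]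
  rw [hM, det_mul, hdG, hdC]
  ring
end

section
/- The specialisation formula for Hall–Littlewood polynomials at even partitions holds: for σ ∈ {0,1} and any partition λ with conjugate λ′, writing r_i := λ′_i, one has q^{(σ+1)|λ|} · P_{2λ}(1, q, q², …; q) = ∏_{i≥1} q^{r_i(r_i+σ)} / (q)_{r_i - r_{i+1}}. -/
open Finset

/-- The normalisation factor `v_λ(t) = ∏_{i≥0} (t;t)_{m_i}/(1-t)^{m_i}` for a partition
`λ` (given as a function `ℕ → ℕ`, parts `λ 0 ≥ λ 1 ≥ ⋯`) considered in `n` variables,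
where `m_i` is the number of indices `k < n` with `λ k = i` (so `m_0 = n - l(λ)`). -/
noncomputable def HLv (lam : ℕ → ℕ) (n : ℕ) (t : ℂ) : ℂ :=
  ∏ i ∈ Finset.range (lam 0 + 1),
    qPoch t t (((Finset.range n).filter fun k => lam k = i).card) /
      (1 - t) ^ (((Finset.range n).filter fun k => lam k = i).card)

/-- The Hall–Littlewood polynomial `P_λ(x₁,…,x_n;t)`, defined by the symmetrisation
formula `P_λ = v_λ(t)⁻¹ ∑_{w ∈ S_n} w(x^λ ∏_{i<j} (x_i - t x_j)/(x_i - x_j))`. -/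
noncomputable def HLP (lam : ℕ → ℕ) (t : ℂ) {n : ℕ} (x : Fin n → ℂ) : ℂ :=
  (∑ w : Equiv.Perm (Fin n),
      (∏ i : Fin n, x (w i) ^ lam (i : ℕ)) *
        ∏ i : Fin n, ∏ j ∈ Finset.Ioi i,
          ((x (w i) - t * x (w j)) / (x (w i) - x (w j))))
    / HLv lam n t

/-- The conjugate partition: `conjP λ j = λ′_j = #{k : λ k ≥ j}` for `j ≥ 1`. -/
def conjP (lam : ℕ →₀ ℕ) (j : ℕ) : ℕ := (lam.support.filter fun k => j ≤ lam k).card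


-- powers of q are distinct
lemma pow_inj_of_abs_lt_one {q : ℂ} (hq : ‖q‖ < 1) (hq0 : q ≠ 0)
    {a b : ℕ} (h : q ^ a = q ^ b) : a = b := by
  have h0 : 0 < ‖q‖ := by simpa using hq0
  have : ‖q‖ ^ a = ‖q‖ ^ b := by
    rw [← norm_pow, ← norm_pow, h]
  by_contra hne
  rcases Nat.lt_or_ge a b with hlt | hge
  · exact absurd this (ne_of_gt (pow_lt_pow_right_of_lt_one₀ h0 hq hlt))
  · have hlt : b < a := by omega
    exact absurd this.symm (ne_of_gt (pow_lt_pow_right_of_lt_one₀ h0 hq hlt))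

lemma one_sub_pow_ne {q : ℂ} (hq : ‖q‖ < 1) {k : ℕ} (hk : 1 ≤ k) :
    1 - q ^ k ≠ 0 := by
  intro h
  have : q ^ k = 1 := by linear_combination -h
  have : ‖q‖ ^ k = 1 := by rw [← norm_pow, this, norm_one]
  have hle : ‖q‖ ^ k ≤ ‖q‖ ^ 1 :=
    pow_le_pow_of_le_one (norm_nonneg q) hq.le hk
  simp only [pow_one] at hle
  nlinarith

-- lower set lemma
lemma mem_iff_lt_card_of_lower (S : Finset ℕ)
    (h : ∀ a b : ℕ, a ≤ b → b ∈ S → a ∈ S) (k : ℕ) : k ∈ S ↔ k < S.card := by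
  constructor
  · intro hk
    have hsub : Finset.range (k + 1) ⊆ S := fun a ha => by
      exact h a k (by simpa using Nat.lt_succ_iff.mp (mem_range.mp ha)) hk
    have := Finset.card_le_card hsub
    simpa using this
  · intro hk
    by_contra hkS
    have hsub : S ⊆ Finset.range k := fun b hb => by
      rw [mem_range]
      by_contra hbk
      exact hkS (h k b (by omega) hb)
    have := Finset.card_le_card hsub
    simp at this
    omega

lemma perm_exists_succ {N : ℕ} (w : Equiv.Perm (Fin N)) (hw : w ≠ 1) :
    ∃ i j : Fin N, i < j ∧ (w i : ℕ) = (w j : ℕ) + 1 := by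
  by_contra hcon
  push_neg at hcon
  -- g = w⁻¹ ; show adjacent increase
  set g := w⁻¹ with hg
  have hadj : ∀ v : ℕ, ∀ h : v + 1 < N, g ⟨v, by omega⟩ < g ⟨v + 1, h⟩ := by
    intro v h
    set i := g ⟨v + 1, h⟩
    set j := g ⟨v, by omega⟩
    have hwi : w i = ⟨v + 1, h⟩ := Equiv.apply_symm_apply w _
    have hwj : w j = ⟨v, by omega⟩ := Equiv.apply_symm_apply w _
    have hij : i ≠ j := by
      intro he
      rw [he, hwj] at hwi
      simp [Fin.ext_iff] at hwi
    rcases lt_or_gt_of_ne hij with h1 | h1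
    · exfalso
      exact (hcon i j h1) (by rw [hwi, hwj])
    · exact h1
  -- G : ℕ → ℕ strictly monotone extension
  set G : ℕ → ℕ := fun v => if h : v < N then (g ⟨v, h⟩ : ℕ) else v + N with hG
  have hGmono : StrictMono G := by
    apply strictMono_nat_of_lt_succ
    intro n
    by_cases h1 : n + 1 < N
    · simp only [hG]
      rw [dif_pos (by omega : n < N), dif_pos h1]
      exact_mod_cast hadj n h1
    · by_cases h2 : n < N
      · simp only [hG]
        rw [dif_pos h2, dif_neg h1]
        have := (g ⟨n, h2⟩).isLt
        omega
      · simp only [hG]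
        rw [dif_neg h2, dif_neg h1]
        omega
  have hle : ∀ v : Fin N, (v : ℕ) ≤ (g v : ℕ) := by
    intro v
    have := hGmono.le_apply (x := (v : ℕ))
    simp only [hG] at this
    rwa [dif_pos v.isLt] at this
  -- sum argument: permutation with g v >= v forces g = id
  have hsum : ∑ v : Fin N, ((g v : ℕ)) = ∑ v : Fin N, (v : ℕ) :=
    Equiv.sum_comp g (fun v => (v : ℕ))
  have heq : ∀ v : Fin N, (v : ℕ) = (g v : ℕ) := by
    have := (Finset.sum_eq_sum_iff_of_le (s := Finset.univ)
      (f := fun v : Fin N => (v : ℕ)) (g := fun v : Fin N => (g v : ℕ))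
      (fun i _ => hle i)).mp hsum.symm
    intro v
    exact this v (Finset.mem_univ v)
  apply hw
  ext v
  have h1 : g (w v) = w v := Fin.ext (heq (w v)).symm
  have h2 : g (w v) = v := Equiv.symm_apply_apply w v
  rw [h2] at h1
  simp only [Equiv.Perm.one_apply]
  exact congrArg Fin.val h1.symm
lemma tele (hq : ‖(q : ℂ)‖ < 1) (m : ℕ) :
    ∏ d ∈ range m, ((1 - q ^ (d + 2)) / (1 - q ^ (d + 1))) = (1 - q ^ (m + 1)) / (1 - q) := by
  induction m with
  | zero =>
    have h2 : (1 : ℂ) - q ≠ 0 := by simpa using one_sub_pow_ne hq (le_refl 1)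
    simp [div_self h2]
  | succ m ih =>
    rw [prod_range_succ, ih]
    have h1 : 1 - q ^ (m + 1) ≠ 0 := one_sub_pow_ne hq (by omega)
    have h2 : (1 : ℂ) - q ≠ 0 := by simpa using one_sub_pow_ne hq (le_refl 1)
    field_simp

lemma inner_prod (hq : ‖(q : ℂ)‖ < 1) (hq0 : q ≠ 0) {i N : ℕ} (hiN : i < N) :
    ∏ j ∈ Ico (i + 1) N, ((q ^ i - q * q ^ j) / (q ^ i - q ^ j)) =
      (1 - q ^ (N - i)) / (1 - q) := by
  rw [Finset.prod_Ico_eq_prod_range]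
  have hstep : ∀ d, (q ^ i - q * q ^ (i + 1 + d)) / (q ^ i - q ^ (i + 1 + d)) =
      (1 - q ^ (d + 2)) / (1 - q ^ (d + 1)) := by
    intro d
    have hne : q ^ i ≠ 0 := pow_ne_zero _ hq0
    have e1 : q ^ i - q * q ^ (i + 1 + d) = q ^ i * (1 - q ^ (d + 2)) := by ring
    have e2 : q ^ i - q ^ (i + 1 + d) = q ^ i * (1 - q ^ (d + 1)) := by ring
    rw [e1, e2, mul_div_mul_left _ _ hne]
  rw [Finset.prod_congr rfl fun d _ => hstep d, tele hq]
  have : N - (i + 1) + 1 = N - i := by omega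
  rw [this]

lemma fin_Ioi_prod {N : ℕ} (i : Fin N) (h : ℕ → ℂ) :
    ∏ j ∈ Ioi i, h (j : ℕ) = ∏ j ∈ Ico ((i : ℕ) + 1) N, h j := by
  apply Finset.prod_nbij' (fun j : Fin N => (j : ℕ)) (fun k => ⟨k % N, Nat.mod_lt _ i.pos⟩)
  · intro a ha
    simp only [mem_Ioi, Fin.lt_def] at ha
    simp only [mem_Ico]
    exact ⟨by omega, a.isLt⟩
  · intro a ha
    simp only [mem_Ico] at ha
    simp only [mem_Ioi, Fin.lt_def]
    rw [Nat.mod_eq_of_lt ha.2]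
    omega
  · intro a _
    apply Fin.ext
    simp [Nat.mod_eq_of_lt a.isLt]
  · intro a ha
    simp only [mem_Ico] at ha
    simp [Nat.mod_eq_of_lt ha.2]
  · intro a _; rfl

lemma cross_prod (hq : ‖(q : ℂ)‖ < 1) (hq0 : q ≠ 0) (N : ℕ) :
    ∏ i : Fin N, ∏ j ∈ Ioi i, ((q ^ (i : ℕ) - q * q ^ (j : ℕ)) / (q ^ (i : ℕ) - q ^ (j : ℕ)))
      = qPoch q q N / (1 - q) ^ N := by
  have step1 : ∀ i : Fin N,
      ∏ j ∈ Ioi i, ((q ^ (i : ℕ) - q * q ^ (j : ℕ)) / (q ^ (i : ℕ) - q ^ (j : ℕ)))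
        = (1 - q ^ (N - (i : ℕ))) / (1 - q) := by
    intro i
    rw [fin_Ioi_prod i (fun j => (q ^ (i : ℕ) - q * q ^ j) / (q ^ (i : ℕ) - q ^ j))]
    exact inner_prod hq hq0 i.isLt
  rw [Finset.prod_congr rfl fun i _ => step1 i]
  rw [Fin.prod_univ_eq_prod_range (fun i => (1 - q ^ (N - i)) / (1 - q))]
  rw [Finset.prod_div_distrib, Finset.prod_const, Finset.card_range]
  congr 1
  rw [qPoch]
  have h1 : ∏ j ∈ range N, (1 - q * q ^ j) = ∏ j ∈ range N, (1 - q ^ (j + 1)) := by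
    apply Finset.prod_congr rfl
    intro j _
    rw [pow_succ]
    ring_nf
  rw [h1, ← Finset.prod_range_reflect (fun j => 1 - q ^ (j + 1)) N]
  apply Finset.prod_congr rfl
  intro i hi
  simp only [mem_range] at hi
  have : N - 1 - i + 1 = N - i := by omega
  rw [this]
section
variable (lam : ℕ →₀ ℕ) (hlam : Antitone lam)
include hlam

lemma conjP_lt_iff {j : ℕ} (hj : 1 ≤ j) (k : ℕ) :
    j ≤ lam k ↔ k < conjP lam j := by
  set S := lam.support.filter fun k => j ≤ lam k with hS
  have hmem : ∀ k, k ∈ S ↔ j ≤ lam k := by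
    intro k
    simp only [hS, mem_filter, Finsupp.mem_support_iff]
    constructor
    · exact fun h => h.2
    · intro h; exact ⟨by omega, h⟩
  have hlow : ∀ a b : ℕ, a ≤ b → b ∈ S → a ∈ S := by
    intro a b hab hb
    rw [hmem] at *
    exact le_trans hb (hlam hab)
  rw [← hmem k]
  exact mem_iff_lt_card_of_lower S hlow k

lemma conjP_mono {a b : ℕ} (ha : 1 ≤ a) (hab : a ≤ b) : conjP lam b ≤ conjP lam a := by
  by_contra h
  push_neg at h
  have h1 : conjP lam a < conjP lam b := h
  have := (conjP_lt_iff lam hlam (by omega : 1 ≤ b) (conjP lam a)).mpr h1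
  have := (conjP_lt_iff lam hlam ha (conjP lam a)).mp (le_trans (by omega) this)
  omega

lemma conjP_top : conjP lam (lam 0 + 1) = 0 := by
  by_contra h
  have h0 : 0 < conjP lam (lam 0 + 1) := by omega
  have := (conjP_lt_iff lam hlam (by omega) 0).mpr h0
  have h2 : lam 0 ≤ lam 0 := le_refl _
  omega

-- multiplicity facts
lemma m_zero {N : ℕ} (hN : conjP lam 1 ≤ N) :
    ((range N).filter fun k => 2 * lam k = 0).card = N - conjP lam 1 := by
  have h1 : ((range N).filter fun k => 2 * lam k = 0) = Ico (conjP lam 1) N := by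
    ext k
    simp only [mem_filter, mem_range, mem_Ico]
    have := conjP_lt_iff lam hlam (le_refl 1) k
    omega
  rw [h1, Nat.card_Ico]

lemma m_odd {N i : ℕ} (hi : i % 2 = 1) :
    ((range N).filter fun k => 2 * lam k = i).card = 0 := by
  rw [Finset.card_eq_zero, Finset.filter_eq_empty_iff]
  intro k _
  omega

lemma m_even {N i : ℕ} (hN : conjP lam 1 ≤ N) :
    ((range N).filter fun k => 2 * lam k = 2 * (i + 1)).card
      = conjP lam (i + 1) - conjP lam (i + 2) := by
  have hrN : conjP lam (i + 1) ≤ N := le_trans (conjP_mono lam hlam (le_refl 1) (by omega)) hN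
  have h1 : ((range N).filter fun k => 2 * lam k = 2 * (i + 1))
      = Ico (conjP lam (i + 2)) (conjP lam (i + 1)) := by
    ext k
    simp only [mem_filter, mem_range, mem_Ico]
    have e1 := conjP_lt_iff lam hlam (by omega : 1 ≤ i + 1) k
    have e2 := conjP_lt_iff lam hlam (by omega : 1 ≤ i + 2) k
    omega
  rw [h1, Nat.card_Ico]

lemma m_total {N : ℕ} :
    ∑ i ∈ range (2 * lam 0 + 1), ((range N).filter fun k => 2 * lam k = i).card = N := by
  have := Finset.card_eq_sum_card_fiberwise
    (f := fun k => 2 * lam k) (s := range N) (t := range (2 * lam 0 + 1))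
    (fun k _ => by
      have : lam k ≤ lam 0 := hlam (Nat.zero_le k)
      simp only [coe_range, Set.mem_Iio]
      omega)
  rw [Finset.card_range] at this
  exact this.symm

-- sum facts
lemma lam_as_sum (k : ℕ) :
    lam k = ∑ j ∈ range (lam 0), if k < conjP lam (j + 1) then 1 else 0 := by
  have hk : lam k ≤ lam 0 := hlam (Nat.zero_le k)
  have h1 : ∀ j, (k < conjP lam (j + 1)) ↔ (j + 1 ≤ lam k) :=
    fun j => (conjP_lt_iff lam hlam (by omega) k).symm
  simp only [h1]
  rw [Finset.sum_boole]
  have h2 : (range (lam 0)).filter (fun j => j + 1 ≤ lam k) = range (lam k) := by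
    ext j
    simp only [mem_filter, mem_range]
    omega
  rw [h2, Finset.card_range]
  simp

lemma sum_lam {N : ℕ} (hN : conjP lam 1 ≤ N) :
    ∑ k ∈ range N, lam k = ∑ j ∈ range (lam 0), conjP lam (j + 1) := by
  have step : ∀ k ∈ range N, lam k
      = ∑ j ∈ range (lam 0), if k < conjP lam (j + 1) then 1 else 0 :=
    fun k _ => lam_as_sum lam hlam k
  rw [Finset.sum_congr rfl step, Finset.sum_comm]
  apply Finset.sum_congr rfl
  intro j _
  rw [Finset.sum_boole]
  have hle : conjP lam (j + 1) ≤ N := le_trans (conjP_mono lam hlam (le_refl 1) (by omega)) hN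
  have h2 : (range N).filter (fun k => k < conjP lam (j + 1)) = range (conjP lam (j + 1)) := by
    ext k
    simp only [mem_filter, mem_range]
    omega
  rw [h2, Finset.card_range]
  simp

lemma sum_klam {N : ℕ} (hN : conjP lam 1 ≤ N) :
    ∑ k ∈ range N, k * (2 * lam k)
      = ∑ j ∈ range (lam 0), conjP lam (j + 1) * (conjP lam (j + 1) - 1) := by
  have step : ∀ k ∈ range N, k * (2 * lam k)
      = ∑ j ∈ range (lam 0), if k < conjP lam (j + 1) then 2 * k else 0 := by
    intro k _
    rw [lam_as_sum lam hlam k, Finset.mul_sum, Finset.mul_sum]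
    apply Finset.sum_congr rfl
    intro j _
    split <;> ring
  rw [Finset.sum_congr rfl step, Finset.sum_comm]
  apply Finset.sum_congr rfl
  intro j _
  have hle : conjP lam (j + 1) ≤ N := le_trans (conjP_mono lam hlam (le_refl 1) (by omega)) hN
  rw [← Finset.sum_filter]
  have h2 : (range N).filter (fun k => k < conjP lam (j + 1)) = range (conjP lam (j + 1)) := by
    ext k
    simp only [mem_filter, mem_range]
    omega
  rw [h2]
  have h3 : ∑ k ∈ range (conjP lam (j + 1)), 2 * k
      = (∑ k ∈ range (conjP lam (j + 1)), k) * 2 := by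
    rw [Finset.sum_mul]
    exact Finset.sum_congr rfl fun k _ => mul_comm 2 k
  rw [h3, Finset.sum_range_id_mul_two]

lemma sum_support {N : ℕ} (hN : conjP lam 1 ≤ N) :
    (lam.sum fun _ v => v) = ∑ k ∈ range N, lam k := by
  apply Finsupp.sum_of_support_subset
  · intro k hk
    rw [Finsupp.mem_support_iff] at hk
    have h1 : 1 ≤ lam k := by omega
    have := (conjP_lt_iff lam hlam (le_refl 1) k).mp h1
    simp only [mem_range]
    omega
  · intro i _
    rfl

-- exponent identity
lemma exponent_eq (σ : ℕ) {N : ℕ} (hN : conjP lam 1 ≤ N) :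
    (σ + 1) * (lam.sum fun _ v => v) + ∑ k ∈ range N, k * (2 * lam k)
      = ∑ j ∈ range (lam 0), conjP lam (j + 1) * (conjP lam (j + 1) + σ) := by
  rw [sum_support lam hlam hN, sum_lam lam hlam hN, sum_klam lam hlam hN, Finset.mul_sum,
    ← Finset.sum_add_distrib]
  apply Finset.sum_congr rfl
  intro j _
  rcases Nat.eq_zero_or_pos (conjP lam (j + 1)) with h | h
  · simp [h]
  · obtain ⟨m, hm⟩ : ∃ m, conjP lam (j + 1) = m + 1 := ⟨conjP lam (j + 1) - 1, by omega⟩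
    rw [hm]
    simp only [Nat.add_sub_cancel]
    ring
end

lemma prod_even_split (L : ℕ) (g : ℕ → ℂ) (hodd : ∀ i, i % 2 = 1 → g i = 1) :
    ∏ i ∈ range (2 * L + 1), g i = g 0 * ∏ i ∈ range L, g (2 * (i + 1)) := by
  rw [← Finset.prod_filter_mul_prod_filter_not (range (2 * L + 1)) (fun i => i % 2 = 0) g]
  have h2 : ∏ i ∈ (range (2 * L + 1)).filter (fun i => ¬ i % 2 = 0), g i = 1 :=
    Finset.prod_eq_one fun i hi => hodd i (by
      simp only [mem_filter] at hi
      omega)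
  rw [h2, mul_one]
  have h3 : (range (2 * L + 1)).filter (fun i => i % 2 = 0)
      = (range (L + 1)).image (fun i => 2 * i) := by
    ext k
    simp only [mem_filter, mem_range, mem_image]
    constructor
    · intro ⟨h1, h4⟩
      exact ⟨k / 2, by omega, by omega⟩
    · rintro ⟨i, hi, rfl⟩
      omega
  rw [h3, Finset.prod_image (fun a _ b _ h => by omega)]
  rw [Finset.prod_range_succ']
  simp only [Nat.mul_zero]
  rw [mul_comm]

section MainEval
variable {q : ℂ} (hq : ‖q‖ < 1) (hq0 : q ≠ 0)

include hq in
lemma qPoch_ne (k : ℕ) : qPoch q q k ≠ 0 := by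
  rw [qPoch]
  apply Finset.prod_ne_zero_iff.mpr
  intro j _
  have : 1 - q * q ^ j = 1 - q ^ (j + 1) := by rw [pow_succ]; ring
  rw [this]
  exact one_sub_pow_ne hq (by omega)

include hq hq0 in
lemma main_eval (σ : ℕ) (lam : ℕ →₀ ℕ) (hlam : Antitone lam) {N : ℕ}
    (hN : conjP lam 1 ≤ N) :
    q ^ ((σ + 1) * (lam.sum fun _ v => v)) *
        HLP (fun k => 2 * lam k) q (fun i : Fin N => q ^ (i : ℕ))
      = (∏ i ∈ range (lam 0),
          q ^ (conjP lam (i + 1) * (conjP lam (i + 1) + σ)) /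
            qPoch q q (conjP lam (i + 1) - conjP lam (i + 2)))
        * (qPoch q q N / qPoch q q (N - conjP lam 1)) := by
  -- the sum over permutations collapses to the identity permutation
  have hsum : (∑ w : Equiv.Perm (Fin N),
      (∏ i : Fin N, (fun i : Fin N => q ^ (i : ℕ)) (w i) ^ ((fun k => 2 * lam k) (i : ℕ))) *
        ∏ i : Fin N, ∏ j ∈ Finset.Ioi i,
          (((fun i : Fin N => q ^ (i : ℕ)) (w i) - q * (fun i : Fin N => q ^ (i : ℕ)) (w j)) /
            ((fun i : Fin N => q ^ (i : ℕ)) (w i) - (fun i : Fin N => q ^ (i : ℕ)) (w j))))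
      = (∏ i : Fin N, (q ^ (i : ℕ)) ^ (2 * lam (i : ℕ))) *
        ∏ i : Fin N, ∏ j ∈ Finset.Ioi i,
          ((q ^ (i : ℕ) - q * q ^ (j : ℕ)) / (q ^ (i : ℕ) - q ^ (j : ℕ))) := by
    rw [Finset.sum_eq_single_of_mem 1 (Finset.mem_univ 1)]
    · simp
    · intro w _ hw
      obtain ⟨i, j, hij, heq⟩ := perm_exists_succ w hw
      apply mul_eq_zero_of_right
      apply Finset.prod_eq_zero (Finset.mem_univ i)
      apply Finset.prod_eq_zero (Finset.mem_Ioi.mpr hij)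
      have hz : q ^ ((w i : ℕ)) - q * q ^ ((w j : ℕ)) = 0 := by
        rw [heq, pow_succ]; ring
      simp only [hz, zero_div]
  -- evaluate the monomial part
  have hmono : (∏ i : Fin N, (q ^ (i : ℕ)) ^ (2 * lam (i : ℕ)))
      = q ^ (∑ k ∈ range N, k * (2 * lam k)) := by
    have h1 : ∀ i : Fin N, (q ^ (i : ℕ)) ^ (2 * lam (i : ℕ)) = q ^ ((i : ℕ) * (2 * lam (i : ℕ))) :=
      fun i => (pow_mul q _ _).symm
    rw [Finset.prod_congr rfl fun i _ => h1 i, Finset.prod_pow_eq_pow_sum]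
    congr 1
    exact Fin.sum_univ_eq_sum_range (fun k => k * (2 * lam k)) N
  -- evaluate HLv
  have hvden : HLv (fun k => 2 * lam k) N q
      = (qPoch q q (N - conjP lam 1) *
          ∏ i ∈ range (lam 0), qPoch q q (conjP lam (i + 1) - conjP lam (i + 2))) /
          (1 - q) ^ N := by
    rw [HLv]
    rw [Finset.prod_div_distrib, Finset.prod_pow_eq_pow_sum]
    rw [m_total lam hlam]
    congr 1
    rw [prod_even_split (lam 0)
      (fun i => qPoch q q (((range N).filter fun k => 2 * lam k = i).card))
      (fun i hi => by
        show qPoch q q (((range N).filter fun k => 2 * lam k = i).card) = 1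
        rw [m_odd lam hlam hi, qPoch, Finset.prod_range_zero])]
    rw [m_zero lam hlam hN]
    congr 1
    apply Finset.prod_congr rfl
    intro i _
    rw [m_even lam hlam hN]
  -- put it together
  rw [HLP, hsum, hmono, cross_prod hq hq0 N, hvden]
  have hP1 : qPoch q q N ≠ 0 := qPoch_ne hq N
  have hP2 : qPoch q q (N - conjP lam 1) ≠ 0 := qPoch_ne hq _
  have hP3 : (∏ i ∈ range (lam 0),
      qPoch q q (conjP lam (i + 1) - conjP lam (i + 2))) ≠ 0 :=
    Finset.prod_ne_zero_iff.mpr fun i _ => qPoch_ne hq _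
  have hq1 : (1 - q) ^ N ≠ 0 := pow_ne_zero _ (by simpa using one_sub_pow_ne hq (le_refl 1))
  have hexp := exponent_eq lam hlam σ hN
  have hrhs : (∏ i ∈ range (lam 0),
      q ^ (conjP lam (i + 1) * (conjP lam (i + 1) + σ)) /
        qPoch q q (conjP lam (i + 1) - conjP lam (i + 2)))
      = q ^ (∑ j ∈ range (lam 0), conjP lam (j + 1) * (conjP lam (j + 1) + σ)) /
          ∏ i ∈ range (lam 0), qPoch q q (conjP lam (i + 1) - conjP lam (i + 2)) := by
    rw [Finset.prod_div_distrib, Finset.prod_pow_eq_pow_sum]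
  rw [hrhs, ← hexp, pow_add]
  field_simp
end MainEval

/-- The specialisation formula
`q^{(σ+1)|λ|} P_{2λ}(1,q,q²,…;q) = ∏_{i≥1} q^{r_i(r_i+σ)}/(q)_{r_i-r_{i+1}}`
with `r_i = λ′_i`; the evaluation of the Hall–Littlewood symmetric function at the
infinite geometric progression `(1,q,q²,…)` is expressed as the limit of its
evaluations at `(1,q,…,q^{N-1})` as `N → ∞`. -/
theorem hall_littlewood_specialisation (q : ℂ) (hq : ‖q‖ < 1) (hq0 : q ≠ 0)
    (σ : ℕ) (hσ : σ ≤ 1) (lam : ℕ →₀ ℕ) (hlam : Antitone lam) :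
    Filter.Tendsto
      (fun N : ℕ =>
        q ^ ((σ + 1) * (lam.sum fun _ v => v)) *
          HLP (fun k => 2 * lam k) q (fun i : Fin N => q ^ (i : ℕ)))
      Filter.atTop
      (nhds (∏ i ∈ Finset.range (lam 0),
        q ^ (conjP lam (i + 1) * (conjP lam (i + 1) + σ)) /
          qPoch q q (conjP lam (i + 1) - conjP lam (i + 2)))) := by
  set r1 : ℕ := conjP lam 1 with hr1
  set T : ℂ := ∏ i ∈ Finset.range (lam 0),
        q ^ (conjP lam (i + 1) * (conjP lam (i + 1) + σ)) /
          qPoch q q (conjP lam (i + 1) - conjP lam (i + 2)) with hT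
  set R : ℕ → ℂ := fun N => ∏ k ∈ Finset.range r1, (1 - q * q ^ ((N - r1) + k)) with hR
  -- the ratio of Pochhammers equals R N for N ≥ r1, and R tends to 1
  have hRlim : Filter.Tendsto R Filter.atTop (nhds 1) := by
    have h1 : (1 : ℂ) = ∏ k ∈ Finset.range r1, (1 : ℂ) := by simp
    rw [h1]
    apply tendsto_finset_prod
    intro k _
    have h2 : Filter.Tendsto (fun N : ℕ => (N - r1) + k) Filter.atTop Filter.atTop := by
      apply Filter.tendsto_atTop_atTop.mpr
      intro b
      exact ⟨b + r1, fun a ha => by omega⟩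
    have h3 : Filter.Tendsto (fun N : ℕ => q ^ ((N - r1) + k)) Filter.atTop (nhds 0) :=
      (tendsto_pow_atTop_nhds_zero_of_norm_lt_one (by simpa using hq)).comp h2
    have h4 : Filter.Tendsto (fun N : ℕ => 1 - q * q ^ ((N - r1) + k)) Filter.atTop
        (nhds (1 - q * 0)) :=
      Filter.Tendsto.sub tendsto_const_nhds (Filter.Tendsto.mul tendsto_const_nhds h3)
    simpa using h4
  have hTR : Filter.Tendsto (fun N => T * R N) Filter.atTop (nhds T) := by
    have := Filter.Tendsto.mul (tendsto_const_nhds (x := T)) hRlim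
    simpa using this
  apply Filter.Tendsto.congr' _ hTR
  rw [Filter.eventuallyEq_iff_exists_mem]
  refine ⟨{N | r1 ≤ N}, Filter.mem_atTop r1, ?_⟩
  intro N hN
  simp only [Set.mem_setOf_eq] at hN
  have hmain := main_eval hq hq0 σ lam hlam (hr1 ▸ hN)
  rw [← hr1] at hmain
  have hratio : qPoch q q N / qPoch q q (N - r1) = R N := by
    have hNe : N - r1 + r1 = N := by omega
    have hsplit : qPoch q q N = qPoch q q (N - r1) * R N := by
      have h5 : qPoch q q ((N - r1) + r1)
          = qPoch q q (N - r1) * ∏ k ∈ Finset.range r1, (1 - q * q ^ ((N - r1) + k)) := by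
        rw [qPoch, qPoch, Finset.prod_range_add]
      rw [hNe] at h5
      rw [h5, hR]
    rw [hsplit]
    rw [mul_comm, mul_div_assoc, div_self (qPoch_ne hq (N - r1)), mul_one]
  exact (hratio ▸ hmain).symm
end
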